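/- arXiv:1902.05593 — 7 statements merged into one kernel-verified Lean document; each statement's English description precedes it below -/
import Mathlib

section
/- Let X be an n-dimensional real Banach space and let {(e_i, e_i*) : i = 1,…,n} be an Auerbach basis of X. Then the set A = {±e_i : i = 1,…,n} (which consists of 2n unit vectors) is a bounded and separated antipodal subset of X with constant d = 1; consequently H_α(X) ≥ 2n. -/
open Metric

noncomputable section

/-- `S` is a bounded and separated antipodal subset of `X` with constant `d`:
`S` lies in the closed unit ball and any two distinct points of `S` are separated,
with gap at least `d`, by a functional of norm at most `1` supporting `S` on both sides. -/
def IsBSA {X : Type*} [NormedAddCommGroup X] [NormedSpace ℝ X] (S : Set X) (d : ℝ) : Prop :=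
  S ⊆ closedBall (0 : X) 1 ∧
    ∀ x ∈ S, ∀ y ∈ S, x ≠ y → ∃ f : X →L[ℝ] ℝ, ‖f‖ ≤ 1 ∧
      d ≤ f x - f y ∧ ∀ z ∈ S, f y ≤ f z ∧ f z ≤ f x

/-- The antipodality condition (with gap `1`) entering the definition of the
antipodal Hadwiger number. -/
def AntipProp {X : Type*} [NormedAddCommGroup X] [NormedSpace ℝ X] (S : Set X) : Prop :=
  ∀ x ∈ S, ∀ y ∈ S, x ≠ y → ∃ f : X →L[ℝ] ℝ, ‖f‖ ≤ 1 ∧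
    1 ≤ f x - f y ∧ ∀ z ∈ S, f y ≤ f z ∧ f z ≤ f x

/-- The antipodal Hadwiger number `H_α(X)`: the largest cardinality of a subset of the
unit sphere satisfying the antipodality condition with gap `1`. -/
def Halpha (X : Type*) [NormedAddCommGroup X] [NormedSpace ℝ X] : ℕ :=
  sSup {k : ℕ | ∃ S : Finset X, S.card = k ∧ (S : Set X) ⊆ sphere (0 : X) 1 ∧
    AntipProp (S : Set X)}

/-- Normalizing a functional which attains value `c` at `x`, `-c` at `y`, and is bounded
by `c` on `S`, with norm at most `2c`. -/
lemma aux_normalize {X : Type*} [NormedAddCommGroup X] [NormedSpace ℝ X]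
    (g₀ : X →L[ℝ] ℝ) (x y : X) (S : Set X) (c : ℝ) (hc : 1 ≤ c) (hxn : ‖x‖ ≤ 1)
    (hx : g₀ x = c) (hy : g₀ y = -c) (hN : ‖g₀‖ ≤ 2 * c)
    (hz : ∀ z ∈ S, |g₀ z| ≤ c) :
    ∃ g : X →L[ℝ] ℝ, ‖g‖ ≤ 1 ∧ 1 ≤ g x - g y ∧ ∀ z ∈ S, g y ≤ g z ∧ g z ≤ g x := by
  have hN1 : c ≤ ‖g₀‖ := by
    calc c = g₀ x := hx.symm
    _ ≤ |g₀ x| := le_abs_self _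
    _ ≤ ‖g₀‖ * ‖x‖ := g₀.le_opNorm x
    _ ≤ ‖g₀‖ * 1 := by
        exact mul_le_mul_of_nonneg_left hxn (norm_nonneg _)
    _ = ‖g₀‖ := mul_one _
  have hN0 : 0 < ‖g₀‖ := lt_of_lt_of_le (by linarith) hN1
  refine ⟨‖g₀‖⁻¹ • g₀, ?_, ?_, ?_⟩
  · have h := norm_smul (‖g₀‖⁻¹) g₀
    rw [h, norm_inv, norm_norm, inv_mul_cancel₀ (ne_of_gt hN0)]
  · have h2 : (‖g₀‖⁻¹ • g₀) x - (‖g₀‖⁻¹ • g₀) y = ‖g₀‖⁻¹ * (2 * c) := by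
      simp only [ContinuousLinearMap.smul_apply, smul_eq_mul, hx, hy]
      ring
    rw [h2, ← div_eq_inv_mul, le_div_iff₀ hN0, one_mul]
    exact hN
  · intro z hzS
    have hb := hz z hzS
    have h1 : -c ≤ g₀ z := (abs_le.mp hb).1
    have h2 : g₀ z ≤ c := (abs_le.mp hb).2
    have hi : (0:ℝ) ≤ ‖g₀‖⁻¹ := inv_nonneg.mpr (norm_nonneg _)
    constructor
    · simp only [ContinuousLinearMap.smul_apply, smul_eq_mul, hy]
      exact mul_le_mul_of_nonneg_left h1 hi
    · simp only [ContinuousLinearMap.smul_apply, smul_eq_mul, hx]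
      exact mul_le_mul_of_nonneg_left h2 hi

lemma halpha_bdd (X : Type*) [NormedAddCommGroup X] [NormedSpace ℝ X] [FiniteDimensional ℝ X] :
    BddAbove {k : ℕ | ∃ S : Finset X, S.card = k ∧ (S : Set X) ⊆ sphere (0 : X) 1 ∧
      AntipProp (S : Set X)} := by
  classical
  obtain ⟨t, htf, hcov⟩ := (Metric.totallyBounded_iff.mp
    (isCompact_sphere (0:X) 1).totallyBounded) (1/2) (by norm_num)
  refine ⟨htf.toFinset.card, ?_⟩
  rintro k ⟨S, rfl, hSs, hSa⟩
  have hsep : ∀ x ∈ S, ∀ y ∈ S, x ≠ y → (1:ℝ) ≤ dist x y := by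
    intro x hx y hy hxy
    obtain ⟨g, hg1, hgap, -⟩ := hSa x hx y hy hxy
    calc (1:ℝ) ≤ g x - g y := hgap
    _ = g (x - y) := by rw [map_sub]
    _ ≤ |g (x - y)| := le_abs_self _
    _ ≤ ‖g‖ * ‖x - y‖ := g.le_opNorm _
    _ ≤ 1 * ‖x - y‖ := mul_le_mul_of_nonneg_right hg1 (norm_nonneg _)
    _ = dist x y := by rw [one_mul, dist_eq_norm]
  have hchoice : ∀ x : X, ∃ c : X, x ∈ (S : Set X) → c ∈ htf.toFinset ∧ dist x c < 1/2 := by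
    intro x
    by_cases hx : x ∈ (S : Set X)
    · have := hcov (hSs hx)
      simp only [Set.mem_iUnion] at this
      obtain ⟨c, hc, hxc⟩ := this
      exact ⟨c, fun _ => ⟨htf.mem_toFinset.mpr hc, mem_ball.mp hxc⟩⟩
    · exact ⟨x, fun h => absurd h hx⟩
  choose φ hφ using hchoice
  apply Finset.card_le_card_of_injOn φ
  · intro x hx; exact (hφ x hx).1
  · intro x hx y hy hxy
    by_contra hne
    have h1 := hsep x hx y hy hne
    have d1 := (hφ x hx).2
    have d2 := (hφ y hy).2
    have : dist x y ≤ dist x (φ x) + dist (φ y) y := by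
      rw [hxy]; exact dist_triangle _ _ _
    rw [dist_comm (φ y) y] at this
    linarith

/-- If `{(b i, f i)}` is an Auerbach basis of an `n`-dimensional real
Banach space `X`, then `A = {± b i}` consists of `2n` unit vectors, is a bounded and
separated antipodal set with constant `d = 1`, and hence `H_α(X) ≥ 2n`. -/
theorem auerbach_pm_isBSA_one (n : ℕ) (X : Type*) [NormedAddCommGroup X] [NormedSpace ℝ X]
    [FiniteDimensional ℝ X] (hdim : Module.finrank ℝ X = n)
    (b : Module.Basis (Fin n) ℝ X) (f : Fin n → (X →L[ℝ] ℝ))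
    (hb : ∀ i, ‖b i‖ = 1) (hf : ∀ i, ‖f i‖ = 1)
    (hbf : ∀ i j, f i (b j) = if i = j then 1 else 0)
    (A : Set X) (hA : A = Set.range (fun i => b i) ∪ Set.range (fun i => -(b i))) :
    A.ncard = 2 * n ∧ A ⊆ sphere (0 : X) 1 ∧ IsBSA A 1 ∧ 2 * n ≤ Halpha X := by
  classical
  have hbi : Function.Injective b := b.injective
  have hmem : ∀ z ∈ A, ∃ k : Fin n, ∃ ζ : ℝ, (ζ = 1 ∨ ζ = -1) ∧ z = ζ • b k := by
    intro z hz
    rw [hA] at hz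
    rcases hz with ⟨k, rfl⟩ | ⟨k, rfl⟩
    · exact ⟨k, 1, Or.inl rfl, by simp⟩
    · exact ⟨k, -1, Or.inr rfl, by simp⟩
  have hsphere : A ⊆ sphere (0 : X) 1 := by
    intro z hz
    obtain ⟨k, ζ, hζ, rfl⟩ := hmem z hz
    simp only [mem_sphere_iff_norm, sub_zero, norm_smul, hb, mul_one]
    rcases hζ with rfl | rfl <;> norm_num
  -- the antipodality property
  have hanti : AntipProp A := by
    intro x hx y hy hxy
    obtain ⟨i, ε, hε, rfl⟩ := hmem x hx
    obtain ⟨j, η, hη, rfl⟩ := hmem y hy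
    set g₀ : X →L[ℝ] ℝ := ε • f i - η • f j with hg₀
    have happly : ∀ (ζ : ℝ) (k : Fin n),
        g₀ (ζ • b k) = ε * (ζ * (if i = k then 1 else 0)) - η * (ζ * (if j = k then 1 else 0)) := by
      intro ζ k
      simp only [hg₀, ContinuousLinearMap.sub_apply, ContinuousLinearMap.smul_apply,
        map_smul, smul_eq_mul, hbf]
      ring
    have hnormg : ‖g₀‖ ≤ 2 := by
      have h1 : ‖g₀‖ ≤ ‖ε • f i‖ + ‖η • f j‖ := norm_sub_le _ _
      have h2 : ‖ε • f i‖ = 1 := by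
        rw [norm_smul ε (f i), hf, mul_one, Real.norm_eq_abs]
        rcases hε with rfl | rfl <;> norm_num
      have h3 : ‖η • f j‖ = 1 := by
        rw [norm_smul η (f j), hf, mul_one, Real.norm_eq_abs]
        rcases hη with rfl | rfl <;> norm_num
      linarith
    have hxn : ‖ε • b i‖ ≤ 1 := by
      rw [norm_smul, hb, mul_one, Real.norm_eq_abs]
      rcases hε with rfl | rfl <;> norm_num
    have hε2 : ε * ε = 1 := by rcases hε with rfl | rfl <;> norm_num
    have hη2 : η * η = 1 := by rcases hη with rfl | rfl <;> norm_num
    by_cases hij : i = j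
    · subst hij
      have hne : ε ≠ η := by
        rintro rfl; exact hxy rfl
      have hprod : ε * η = -1 := by
        rcases hε with rfl | rfl <;> rcases hη with rfl | rfl <;> first | exact (hne rfl).elim | norm_num
      apply aux_normalize g₀ _ _ A 2 (by norm_num) hxn
      · rw [happly, if_pos rfl]
        linear_combination hε2 - hprod
      · rw [happly, if_pos rfl]
        linear_combination hprod - hη2
      · linarith
      · intro z hz
        obtain ⟨k, ζ, hζ, rfl⟩ := hmem z hz
        rw [happly]
        rcases hζ with rfl | rfl <;> rcases hε with rfl | rfl <;>
          rcases hη with rfl | rfl <;> split_ifs <;> norm_num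
    · apply aux_normalize g₀ _ _ A 1 le_rfl hxn
      · rw [happly, if_pos rfl, if_neg (fun h => hij h.symm)]
        linear_combination hε2
      · rw [happly, if_neg hij, if_pos rfl]
        linear_combination -hη2
      · linarith
      · intro z hz
        obtain ⟨k, ζ, hζ, rfl⟩ := hmem z hz
        rw [happly]
        rcases hζ with rfl | rfl <;> rcases hε with rfl | rfl <;>
          rcases hη with rfl | rfl <;> split_ifs with h1 h2 <;>
          first | exact absurd (h1.trans h2.symm) hij | norm_num
  -- cardinality
  have hdisj : Disjoint (Set.range fun i => b i) (Set.range fun i => -(b i)) := by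
    rw [Set.disjoint_left]
    rintro x ⟨i, rfl⟩ ⟨j, hj⟩
    have hj' : -(b j) = b i := hj
    have h1 : f i (b i) = f i (-(b j)) := by rw [hj']
    rw [map_neg] at h1
    simp only [hbf, if_pos rfl] at h1
    split_ifs at h1 <;> norm_num at h1
  have hninj : Function.Injective (fun i => -(b i)) := by
    intro i j hij
    exact hbi (neg_injective hij)
  have hcard1 : (Set.range fun i => b i).ncard = n := by
    rw [← Set.image_univ, Set.ncard_image_of_injective _ hbi, Set.ncard_univ,
      Nat.card_eq_fintype_card, Fintype.card_fin]
  have hcard2 : (Set.range fun i => -(b i)).ncard = n := by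
    rw [← Set.image_univ, Set.ncard_image_of_injective _ hninj, Set.ncard_univ,
      Nat.card_eq_fintype_card, Fintype.card_fin]
  have hAfin : A.Finite := by
    rw [hA]; exact (Set.finite_range _).union (Set.finite_range _)
  have hcard : A.ncard = 2 * n := by
    rw [hA, Set.ncard_union_eq hdisj (Set.finite_range _) (Set.finite_range _),
      hcard1, hcard2]
    ring
  refine ⟨hcard, hsphere, ⟨?_, fun x hx y hy hxy => hanti x hx y hy hxy⟩, ?_⟩
  · exact hsphere.trans sphere_subset_closedBall
  · have hmem2n : 2 * n ∈ {k : ℕ | ∃ S : Finset X, S.card = k ∧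
        (S : Set X) ⊆ sphere (0 : X) 1 ∧ AntipProp (S : Set X)} := by
      refine ⟨hAfin.toFinset, ?_, ?_, ?_⟩
      · rw [← Set.ncard_eq_toFinset_card A hAfin, hcard]
      · rw [Set.Finite.coe_toFinset]; exact hsphere
      · rw [Set.Finite.coe_toFinset]; exact hanti
    exact le_csSup (halpha_bdd X) hmem2n

end
end

section
/- Let X be an n-dimensional smooth real Banach space and let {(e_i, e_i*) : i = 1,…,n} be an Auerbach basis of X. Then there exists ε > 0 such that the set A = {±e_i : i = 1,…,n} is a bounded and separated antipodal subset of the closed unit ball of X with constant d = 1 + ε; consequently H'_α(X) ≥ 2n. -/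
open Metric

noncomputable section

/-- The strict antipodality condition (with gap `> 1`) entering the definition of the
strict antipodal Hadwiger number. -/
def StrictAntipProp {X : Type*} [NormedAddCommGroup X] [NormedSpace ℝ X] (S : Set X) : Prop :=
  ∀ x ∈ S, ∀ y ∈ S, x ≠ y → ∃ f : X →L[ℝ] ℝ, ‖f‖ ≤ 1 ∧
    1 < f x - f y ∧ ∀ z ∈ S, f y ≤ f z ∧ f z ≤ f x

/-- The strict antipodal Hadwiger number `H'_α(X)`. -/
def strictHalpha (X : Type*) [NormedAddCommGroup X] [NormedSpace ℝ X] : ℕ :=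
  sSup {k : ℕ | ∃ S : Finset X, S.card = k ∧ (S : Set X) ⊆ sphere (0 : X) 1 ∧
    StrictAntipProp (S : Set X)}

lemma aux_attain {X : Type*} [NormedAddCommGroup X] [NormedSpace ℝ X]
    [FiniteDimensional ℝ X] [Nontrivial X] (φ : X →L[ℝ] ℝ) :
    ∃ x : X, ‖x‖ = 1 ∧ φ x = ‖φ‖ := by
  have hne : (sphere (0:X) 1).Nonempty := NormedSpace.sphere_nonempty.mpr zero_le_one
  obtain ⟨x₀, hx₀, hmax⟩ := (isCompact_sphere (0:X) 1).exists_isMaxOn hne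
    (φ.continuous.continuousOn)
  have hx₀n : ‖x₀‖ = 1 := by simpa using mem_sphere_zero_iff_norm.mp hx₀
  have hneg : ∀ x : X, ‖x‖ = 1 → φ x ≤ φ x₀ := fun x hx =>
    hmax (mem_sphere_zero_iff_norm.mpr hx)
  have h0 : 0 ≤ φ x₀ := by
    have := hneg (-x₀) (by simp [hx₀n])
    simp at this; linarith
  have habs : ∀ x : X, ‖x‖ = 1 → |φ x| ≤ φ x₀ := by
    intro x hx
    rcases abs_cases (φ x) with ⟨h, _⟩ | ⟨h, _⟩
    · rw [h]; exact hneg x hx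
    · rw [h]
      have := hneg (-x) (by simp [hx])
      simpa using this
  refine ⟨x₀, hx₀n, le_antisymm (by
    calc φ x₀ ≤ |φ x₀| := le_abs_self _
    _ ≤ ‖φ‖ * ‖x₀‖ := φ.le_opNorm x₀
    _ = ‖φ‖ := by rw [hx₀n, mul_one]) ?_⟩
  refine φ.opNorm_le_bound h0 ?_
  intro x
  rcases eq_or_ne x 0 with rfl | hx
  · simp
  · have hxn : ‖x‖ ≠ 0 := norm_ne_zero_iff.mpr hx
    have hu : ‖(‖x‖⁻¹ • x)‖ = 1 := by
      rw [norm_smul, norm_inv, norm_norm, inv_mul_cancel₀ hxn]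
    have := habs _ hu
    rw [map_smul, smul_eq_mul, abs_mul, abs_inv, abs_norm] at this
    have h2 : |φ x| ≤ ‖x‖ * φ x₀ := by
      have h3 := mul_le_mul_of_nonneg_left this (norm_nonneg x)
      rwa [← mul_assoc, mul_inv_cancel₀ hxn, one_mul] at h3
    calc ‖φ x‖ = |φ x| := rfl
    _ ≤ ‖x‖ * φ x₀ := h2
    _ = φ x₀ * ‖x‖ := mul_comm _ _

lemma aux_two {X : Type*} [NormedAddCommGroup X] [NormedSpace ℝ X]
    [FiniteDimensional ℝ X] [Nontrivial X]
    (hsmooth : ∀ x : X, x ≠ 0 → ∃! g : X →L[ℝ] ℝ, ‖g‖ = 1 ∧ g x = ‖x‖)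
    (g h : X →L[ℝ] ℝ) (hg : ‖g‖ = 1) (hh : ‖h‖ = 1) (hne : g ≠ h) :
    ‖g + h‖ < 2 := by
  have hle : ‖g + h‖ ≤ 2 := by
    calc ‖g + h‖ ≤ ‖g‖ + ‖h‖ := norm_add_le _ _
    _ = 2 := by rw [hg, hh]; norm_num
  rcases lt_or_eq_of_le hle with hlt | heq
  · exact hlt
  · exfalso
    obtain ⟨x, hx1, hx2⟩ := aux_attain (g + h)
    rw [heq] at hx2
    have hgx : g x ≤ 1 := by
      calc g x ≤ |g x| := le_abs_self _
      _ ≤ ‖g‖ * ‖x‖ := g.le_opNorm x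
      _ = 1 := by rw [hg, hx1, one_mul]
    have hhx : h x ≤ 1 := by
      calc h x ≤ |h x| := le_abs_self _
      _ ≤ ‖h‖ * ‖x‖ := h.le_opNorm x
      _ = 1 := by rw [hh, hx1, one_mul]
    have hsum : g x + h x = 2 := by
      simpa using hx2
    have hgx1 : g x = 1 := by linarith
    have hhx1 : h x = 1 := by linarith
    have hx0 : x ≠ 0 := by
      intro h0; rw [h0] at hx1; simp at hx1
    obtain ⟨φ, _, huniq⟩ := hsmooth x hx0
    have h1 : g = φ := huniq g ⟨hg, by rw [hgx1, hx1]⟩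
    have h2 : h = φ := huniq h ⟨hh, by rw [hhx1, hx1]⟩
    exact hne (h1.trans h2.symm)

lemma aux_bdd {X : Type*} [NormedAddCommGroup X] [NormedSpace ℝ X] [FiniteDimensional ℝ X] :
    BddAbove {k : ℕ | ∃ S : Finset X, S.card = k ∧ (S : Set X) ⊆ sphere (0 : X) 1 ∧
      StrictAntipProp (S : Set X)} := by
  obtain ⟨t, htfin, hcov⟩ := totallyBounded_iff.mp
    (isCompact_sphere (0:X) 1).totallyBounded (1/2) (by norm_num)
  refine ⟨htfin.toFinset.card, ?_⟩
  rintro k ⟨S, rfl, hsub, hprop⟩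
  have hch : ∀ x ∈ S, ∃ y ∈ t, x ∈ ball y (1/2) := by
    intro x hx
    have := hcov (hsub hx)
    simpa using this
  classical
  set c : X → X := fun x => if h : x ∈ S then (hch x h).choose else 0 with hc
  apply Finset.card_le_card_of_injOn c
  · intro x hx
    rw [Finset.mem_coe, Set.Finite.mem_toFinset]
    simp only [hc, dif_pos (Finset.mem_coe.mp hx)]
    exact (hch x hx).choose_spec.1
  · intro x₁ hx₁ x₂ hx₂ hcc
    by_contra hne
    simp only [Finset.mem_coe] at hx₁ hx₂
    obtain ⟨f, hf1, hf2, _⟩ := hprop x₁ (by exact_mod_cast hx₁) x₂ (by exact_mod_cast hx₂) hne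
    have hb₁ : x₁ ∈ ball (c x₁) (1/2) := by
      simp only [hc, dif_pos hx₁]; exact (hch x₁ hx₁).choose_spec.2
    have hb₂ : x₂ ∈ ball (c x₁) (1/2) := by
      rw [hcc]; simp only [hc, dif_pos hx₂]; exact (hch x₂ hx₂).choose_spec.2
    have hd : dist x₁ x₂ < 1 := by
      calc dist x₁ x₂ ≤ dist x₁ (c x₁) + dist x₂ (c x₁) := dist_triangle_right _ _ _
      _ < 1/2 + 1/2 := add_lt_add (mem_ball.mp hb₁) (mem_ball.mp hb₂)
      _ = 1 := by norm_num
    have : f x₁ - f x₂ ≤ 1 := by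
      calc f x₁ - f x₂ = f (x₁ - x₂) := by rw [map_sub]
      _ ≤ |f (x₁ - x₂)| := le_abs_self _
      _ ≤ ‖f‖ * ‖x₁ - x₂‖ := f.le_opNorm _
      _ ≤ 1 * ‖x₁ - x₂‖ := mul_le_mul_of_nonneg_right hf1 (norm_nonneg _)
      _ = dist x₁ x₂ := by rw [one_mul, dist_eq_norm]
      _ ≤ 1 := le_of_lt hd
    linarith

set_option maxHeartbeats 1600000

/-- If `X` is an `n`-dimensional smooth real Banach space (every nonzero
point has a unique norm-one support functional) and `{(b i, f i)}` is an Auerbach basis of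
`X`, then for some `ε > 0` the set `A = {± b i}` is a bounded and separated antipodal
subset of the closed unit ball with constant `d = 1 + ε`; consequently `H'_α(X) ≥ 2n`. -/
theorem smooth_auerbach_pm_isBSA (n : ℕ) (X : Type*) [NormedAddCommGroup X] [NormedSpace ℝ X]
    [FiniteDimensional ℝ X] (hdim : Module.finrank ℝ X = n)
    (hsmooth : ∀ x : X, x ≠ 0 → ∃! g : X →L[ℝ] ℝ, ‖g‖ = 1 ∧ g x = ‖x‖)
    (b : Module.Basis (Fin n) ℝ X) (f : Fin n → (X →L[ℝ] ℝ))
    (hb : ∀ i, ‖b i‖ = 1) (hf : ∀ i, ‖f i‖ = 1)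
    (hbf : ∀ i j, f i (b j) = if i = j then 1 else 0)
    (A : Set X) (hA : A = Set.range (fun i => b i) ∪ Set.range (fun i => -(b i))) :
    ∃ ε : ℝ, 0 < ε ∧ IsBSA A (1 + ε) ∧ 2 * n ≤ strictHalpha X := by
  classical
  rcases Nat.eq_zero_or_pos n with hn0 | hn
  · subst hn0
    refine ⟨1, one_pos, ⟨?_, ?_⟩, by simp⟩
    · rw [hA]; rintro z (⟨i, _⟩ | ⟨i, _⟩) <;> exact absurd i.2 (by simp)
    · rw [hA]; rintro x (⟨i, _⟩ | ⟨i, _⟩) <;> exact absurd i.2 (by simp)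
  -- n ≥ 1
  have hbne : ∀ i : Fin n, b i ≠ 0 := by
    intro i h
    have := hb i
    rw [h] at this; simp at this
  haveI : Nontrivial X := ⟨b ⟨0, hn⟩, 0, hbne _⟩
  -- members of A
  have hmemA : ∀ z, z ∈ A ↔ ∃ (i : Fin n) (s : ℝ), (s = 1 ∨ s = -1) ∧ z = s • b i := by
    intro z
    rw [hA]
    constructor
    · rintro (⟨i, rfl⟩ | ⟨i, rfl⟩)
      · exact ⟨i, 1, Or.inl rfl, by simp⟩
      · exact ⟨i, -1, Or.inr rfl, by simp⟩
    · rintro ⟨i, s, (rfl | rfl), rfl⟩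
      · exact Or.inl ⟨i, by simp⟩
      · exact Or.inr ⟨i, by simp⟩
  -- bound on functional values over A
  have hbound : ∀ (φ : X →L[ℝ] ℝ) (C : ℝ), (∀ k, |φ (b k)| ≤ C) → ∀ z ∈ A, |φ z| ≤ C := by
    intro φ C hC z hz
    obtain ⟨i, s, hs, rfl⟩ := (hmemA z).mp hz
    rw [map_smul, smul_eq_mul, abs_mul]
    rcases hs with rfl | rfl <;> simpa using hC i
  have hnsmul : ∀ (σ : ℝ) (g : X →L[ℝ] ℝ), ‖σ • g‖ = |σ| * ‖g‖ := fun σ g => by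
    have := norm_smul σ g; rwa [Real.norm_eq_abs] at this
  -- strict gap
  have hgap : ∀ i j : Fin n, i ≠ j → ∀ σ : ℝ, (σ = 1 ∨ σ = -1) → ‖f i + σ • f j‖ < 2 := by
    intro i j hij σ hσ
    have hσ1 : |σ| = 1 := by rcases hσ with rfl | rfl <;> norm_num
    apply aux_two hsmooth _ _ (hf i) (by rw [hnsmul]; simp [hσ1, hf j])
    intro heq
    have := congrArg (fun φ : X →L[ℝ] ℝ => φ (b i)) heq
    simp only [ContinuousLinearMap.coe_smul', Pi.smul_apply, smul_eq_mul] at this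
    rw [hbf i i, hbf j i, if_pos rfl, if_neg (Ne.symm hij)] at this
    simp at this
  -- the maximum norm and epsilon
  have hge1 : ∀ (g : X →L[ℝ] ℝ) (i : Fin n), g (b i) = 1 → 1 ≤ ‖g‖ := by
    intro g i hgi
    have := g.le_opNorm (b i)
    rw [hgi, hb i, mul_one] at this
    calc (1:ℝ) = |(1:ℝ)| := by norm_num
    _ = |g (b i)| := by rw [hgi]
    _ ≤ ‖g‖ := by rw [hgi]; simpa using this
  have hex : ∃ M : ℝ, 1 ≤ M ∧ M < 2 ∧
      ∀ i j : Fin n, i ≠ j → ‖f i + f j‖ ≤ M ∧ ‖f i - f j‖ ≤ M := by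
    by_cases hn1 : ∀ i j : Fin n, i = j
    · exact ⟨1, le_refl 1, one_lt_two, fun i j hij => absurd (hn1 i j) hij⟩
    · push_neg at hn1
      obtain ⟨i₀, j₀, hij₀⟩ := hn1
      set P : Finset (Fin n × Fin n) := Finset.univ.filter (fun p => p.1 ≠ p.2) with hP
      have hPne : P.Nonempty := ⟨(i₀, j₀), by simp [hP, hij₀]⟩
      refine ⟨P.sup' hPne (fun p => max ‖f p.1 + f p.2‖ ‖f p.1 - f p.2‖), ?_, ?_, ?_⟩
      · refine le_trans ?_ (Finset.le_sup' _ (show (i₀, j₀) ∈ P by simp [hP, hij₀]))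
        refine le_trans ?_ (le_max_left _ _)
        apply hge1 _ i₀
        simp only [ContinuousLinearMap.add_apply]
        rw [hbf i₀ i₀, hbf j₀ i₀, if_pos rfl, if_neg (Ne.symm hij₀)]
        norm_num
      · rw [Finset.sup'_lt_iff]
        rintro ⟨i, j⟩ hp
        have hij : i ≠ j := by simpa [hP] using hp
        refine max_lt ?_ ?_
        · simpa using hgap i j hij 1 (Or.inl rfl)
        · have := hgap i j hij (-1) (Or.inr rfl)
          rw [show f i + (-1:ℝ) • f j = f i - f j by ext z; simp [sub_eq_add_neg]] at this
          exact this
      · intro i j hij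
        have hle := Finset.le_sup' (fun p : Fin n × Fin n => max ‖f p.1 + f p.2‖ ‖f p.1 - f p.2‖)
          (show (i, j) ∈ P by simp [hP, hij])
        exact ⟨le_trans (le_max_left _ _) hle, le_trans (le_max_right _ _) hle⟩
  obtain ⟨M, hM1, hM2, hNM⟩ := hex
  have hBSA : IsBSA A (1 + (2 - M) / 2) := by
    refine ⟨?_, ?_⟩
    · -- A ⊆ closedBall
      intro z hz
      obtain ⟨i, s, hs, rfl⟩ := (hmemA z).mp hz
      rw [mem_closedBall, dist_zero_right, norm_smul, hb i]
      rcases hs with rfl | rfl <;> norm_num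
    · -- pair separation
      intro x hx y hy hxy
      obtain ⟨i, s, hs, rfl⟩ := (hmemA x).mp hx
      obtain ⟨j, t, ht, rfl⟩ := (hmemA y).mp hy
      have hs2 : s * s = 1 := by rcases hs with rfl | rfl <;> norm_num
      have ht2 : t * t = 1 := by rcases ht with rfl | rfl <;> norm_num
      rcases eq_or_ne i j with rfl | hij
      · -- same index, opposite sign
        have hst : t = -s := by
          rcases hs with rfl | rfl <;> rcases ht with rfl | rfl <;> simp_all
        subst hst
        refine ⟨s • f i, ?_, ?_, ?_⟩
        · rw [hnsmul, hf i]
          rcases hs with rfl | rfl <;> norm_num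
        · have h1 : (s • f i) (s • b i) = 1 := by
            simp only [ContinuousLinearMap.coe_smul', Pi.smul_apply, map_smul, smul_eq_mul]
            rw [hbf i i, if_pos rfl]
            linear_combination hs2
          have h2 : (s • f i) (-s • b i) = -1 := by
            simp only [ContinuousLinearMap.coe_smul', Pi.smul_apply, map_smul, smul_eq_mul]
            rw [hbf i i, if_pos rfl]
            linear_combination -hs2
          rw [h1, h2]
          linarith
        · intro z hz
          have hC : ∀ k, |(s • f i) (b k)| ≤ 1 := by
            intro k
            simp only [ContinuousLinearMap.coe_smul', Pi.smul_apply, smul_eq_mul, abs_mul]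
            rw [hbf i k]
            rcases hs with rfl | rfl <;> split <;> norm_num
          have := hbound (s • f i) 1 hC z hz
          have h1 : (s • f i) (s • b i) = 1 := by
            simp only [ContinuousLinearMap.coe_smul', Pi.smul_apply, map_smul, smul_eq_mul]
            rw [hbf i i, if_pos rfl]; linear_combination hs2
          have h2 : (s • f i) (-s • b i) = -1 := by
            simp only [ContinuousLinearMap.coe_smul', Pi.smul_apply, map_smul, smul_eq_mul]
            rw [hbf i i, if_pos rfl]; linear_combination -hs2
          rw [h1, h2]
          constructor <;> [exact neg_le_of_abs_le this; exact le_of_abs_le this]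
      · -- different indices
        set h : X →L[ℝ] ℝ := s • f i - t • f j with hh
        have hval : ∀ k, h (b k) = s * (if i = k then 1 else 0) - t * (if j = k then 1 else 0) := by
          intro k
          simp only [hh, ContinuousLinearMap.coe_sub', ContinuousLinearMap.coe_smul',
            Pi.sub_apply, Pi.smul_apply, smul_eq_mul]
          rw [hbf i k, hbf j k]
        have hhx : h (s • b i) = 1 := by
          rw [map_smul, smul_eq_mul, hval i, if_pos rfl, if_neg (Ne.symm hij)]
          linear_combination hs2
        have hhy : h (t • b j) = -1 := by
          rw [map_smul, smul_eq_mul, hval j, if_pos rfl, if_neg hij]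
          linear_combination -ht2
        set N : ℝ := ‖h‖ with hN
        have hN1 : 1 ≤ N := by
          have h5 := h.le_opNorm (b i)
          rw [hb i, mul_one] at h5
          have h6 : h (b i) = s := by
            have := hval i
            rw [if_pos rfl, if_neg (Ne.symm hij)] at this
            linear_combination this
          rw [h6] at h5
          have h7 : ‖s‖ = 1 := by rcases hs with rfl | rfl <;> norm_num
          rw [h7] at h5
          exact h5
        have hNM' : N ≤ M := by
          have hrw : h = s • (f i + (-(s*t)) • f j) := by
            rw [hh]
            ext z
            simp only [ContinuousLinearMap.coe_sub', ContinuousLinearMap.coe_smul',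
              ContinuousLinearMap.coe_add', Pi.sub_apply, Pi.smul_apply, Pi.add_apply, smul_eq_mul]
            linear_combination (t * (f j z)) * hs2
          rcases mul_self_eq_one_iff.mp (by linear_combination (t*t) * hs2 + ht2 : (s*t) * (s*t) = 1) with hst1 | hst1
          · have : h = s • (f i - f j) := by
              rw [hrw, hst1]; congr 1; ext z; simp [sub_eq_add_neg]
            rw [hN, this, hnsmul]
            have : |s| = 1 := by rcases hs with rfl | rfl <;> norm_num
            rw [this, one_mul]
            exact (hNM i j hij).2
          · have : h = s • (f i + f j) := by
              rw [hrw, hst1]; congr 1; ext z; simp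
            rw [hN, this, hnsmul]
            have : |s| = 1 := by rcases hs with rfl | rfl <;> norm_num
            rw [this, one_mul]
            exact (hNM i j hij).1
        have hNpos : 0 < N := by linarith
        refine ⟨N⁻¹ • h, ?_, ?_, ?_⟩
        · rw [hnsmul, abs_inv, abs_of_pos hNpos, inv_mul_cancel₀ (ne_of_gt hNpos)]
        · simp only [ContinuousLinearMap.coe_smul', Pi.smul_apply, smul_eq_mul]
          rw [hhx, hhy]
          have key : 1 + (2 - M) / 2 ≤ 2 / N := by
            have h1 : 2 / M ≤ 2 / N :=
              div_le_div_of_nonneg_left (by norm_num) hNpos hNM'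
            have h2 : 1 + (2 - M) / 2 ≤ 2 / M := by
              rw [le_div_iff₀ (by linarith : (0:ℝ) < M)]
              nlinarith [sq_nonneg (M - 2)]
            linarith
          have h3 : N⁻¹ * 1 - N⁻¹ * -1 = 2 / N := by
            field_simp
            norm_num
          linarith
        · intro z hz
          have hC : ∀ k, |h (b k)| ≤ 1 := by
            intro k
            rw [hval k]
            rcases hs with rfl | rfl <;> rcases ht with rfl | rfl <;>
              rcases eq_or_ne i k with rfl | hik <;> simp_all <;> split <;> norm_num
          have hz1 := hbound h 1 hC z hz
          simp only [ContinuousLinearMap.coe_smul', Pi.smul_apply, smul_eq_mul]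
          rw [hhx, hhy, mul_one, mul_neg_one]
          have hNi : 0 < N⁻¹ := inv_pos.mpr hNpos
          constructor
          · have h4 := mul_le_mul_of_nonneg_left (neg_le_of_abs_le hz1) (le_of_lt hNi)
            linarith [h4]
          · have h4 := mul_le_mul_of_nonneg_left (le_of_abs_le hz1) (le_of_lt hNi)
            linarith [h4]
  refine ⟨(2 - M) / 2, by linarith, hBSA, ?_⟩
  -- 2n ≤ strictHalpha
  have hbij : ∀ i j : Fin n, b i = b j → i = j := by
    intro i j hbe
    by_contra hij
    have h1 := congrArg (fun v => f i v) hbe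
    rw [hbf i i, hbf i j, if_pos rfl, if_neg hij] at h1
    norm_num at h1
  have hbnj : ∀ i j : Fin n, b i ≠ -(b j) := by
    intro i j hbe
    have h1 := congrArg (fun v => f i v) hbe
    simp only [map_neg] at h1
    rw [hbf i i, hbf i j, if_pos rfl] at h1
    rcases eq_or_ne i j with rfl | hij
    · rw [if_pos rfl] at h1; norm_num at h1
    · rw [if_neg hij] at h1; norm_num at h1
  set κ : Fin n × Bool → X := fun p => if p.2 then b p.1 else -(b p.1) with hκ
  have hκinj : Function.Injective κ := by
    rintro ⟨i, u⟩ ⟨j, v⟩ hpq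
    cases u <;> cases v <;>
      simp only [hκ, Bool.false_eq_true, if_true, if_false] at hpq
    · rw [hbij i j (neg_inj.mp hpq)]
    · exact absurd hpq.symm (hbnj j i)
    · exact absurd hpq (hbnj i j)
    · rw [hbij i j hpq]
  set S : Finset X := Finset.image κ Finset.univ with hS
  have hcard : S.card = 2 * n := by
    rw [hS, Finset.card_image_of_injective _ hκinj, Finset.card_univ]
    simp [Fintype.card_prod, mul_comm]
  have hSA : (S : Set X) = A := by
    rw [hS]
    ext z
    simp only [Finset.coe_image, Finset.coe_univ, Set.image_univ, Set.mem_range]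
    rw [hmemA z]
    constructor
    · rintro ⟨⟨i, u⟩, rfl⟩
      cases u
      · exact ⟨i, -1, Or.inr rfl, by simp [hκ]⟩
      · exact ⟨i, 1, Or.inl rfl, by simp [hκ]⟩
    · rintro ⟨i, s, (rfl | rfl), rfl⟩
      · exact ⟨(i, true), by simp [hκ]⟩
      · exact ⟨(i, false), by simp [hκ]⟩
  have hSsph : (S : Set X) ⊆ sphere (0:X) 1 := by
    rw [hSA]
    intro z hz
    obtain ⟨i, s, hs, rfl⟩ := (hmemA z).mp hz
    rw [mem_sphere_zero_iff_norm, norm_smul, hb i]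
    rcases hs with rfl | rfl <;> norm_num
  have hsprop : StrictAntipProp (S : Set X) := by
    rw [hSA]
    intro x hx y hy hxy
    obtain ⟨g, hg1, hg2, hg3⟩ := hBSA.2 x hx y hy hxy
    exact ⟨g, hg1, by linarith, hg3⟩
  exact le_csSup aux_bdd ⟨S, hcard, hSsph, hsprop⟩

end
end

section
/- Let n ≥ 2 and 1 < p < ∞ with p > log₂ n. Then H'_α(ℓ_p^n) = 2^n (and hence also H_α(ℓ_p^n) = 2^n); in particular the set S' = n^{-1/p}·{−1,1}^n is a bounded and separated antipodal subset of the unit sphere of ℓ_p^n of cardinality 2^n with constant d = 2/n^{1/p} > 1. -/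
open Metric
open scoped Classical

noncomputable section

open Module MeasureTheory Pointwise
open scoped ENNReal

/-- In a halfspace, the interior lies strictly inside. -/
lemma interior_le_subset_lt {E : Type*} [NormedAddCommGroup E] [NormedSpace ℝ E]
    (f : E →L[ℝ] ℝ) {u : E} (hu : 0 < f u) (m : ℝ) :
    interior {z : E | m ≤ f z} ⊆ {z : E | m < f z} := by
  intro z hz
  have hu0 : u ≠ 0 := by rintro rfl; simp at hu
  have hnu : 0 < ‖u‖ := norm_pos_iff.2 hu0
  rcases Metric.isOpen_iff.1 isOpen_interior z hz with ⟨ε, hε, hball⟩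
  set t := ε / (2 * ‖u‖) with ht
  have htpos : 0 < t := div_pos hε (by positivity)
  have hmem : z - t • u ∈ Metric.ball z ε := by
    rw [Metric.mem_ball, dist_eq_norm]
    have h0 : z - t • u - z = -(t • u) := by abel
    rw [h0, norm_neg, norm_smul, Real.norm_eq_abs, abs_of_pos htpos, ht]
    have h2 : ε / (2 * ‖u‖) * ‖u‖ = ε / 2 := by field_simp
    rw [h2]; linarith
  have h1 : m ≤ f (z - t • u) := by
    have := hball hmem
    have h3 : z - t • u ∈ {z : E | m ≤ f z} := interior_subset this
    exact h3
  have h2 : f (z - t • u) = f z - t * f u := by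
    rw [map_sub, f.map_smul]; simp
  have := mul_pos htpos hu
  show m < f z
  nlinarith

/-- Danzer–Grünbaum: an antipodal set in an `n`-dimensional normed space has at most `2^n`
points. -/
lemma antip_card_le : ∀ (N : ℕ) (E : Type) [NormedAddCommGroup E] [NormedSpace ℝ E]
    [FiniteDimensional ℝ E], finrank ℝ E ≤ N →
    ∀ S : Finset E, AntipProp (S : Set E) → S.card ≤ 2 ^ finrank ℝ E := by
  intro N
  induction N with
  | zero =>
    intro E _ _ _ hle S _
    have h0 : finrank ℝ E = 0 := Nat.le_zero.1 hle
    have : Subsingleton E := finrank_zero_iff.1 h0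
    have : S.card ≤ 1 := Finset.card_le_one.2 (fun a _ b _ => Subsingleton.elim a b)
    simpa [h0] using this
  | succ N ih =>
    intro E _ _ _ hle S hS
    by_cases htop : affineSpan ℝ (S : Set E) = ⊤
    · -- volume argument
      borelize E
      set μ : Measure E := Measure.addHaar with hμ
      set d := finrank ℝ E with hd
      set K := convexHull ℝ (S : Set E) with hK
      have hKconv : Convex ℝ K := convex_convexHull ℝ _
      have hKcomp : IsCompact K := S.finite_toSet.isCompact_convexHull ℝ
      have hKint : (interior K).Nonempty := by
        rw [hKconv.interior_nonempty_iff_affineSpan_eq_top, hK, affineSpan_convexHull]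
        exact htop
      have hK0 : 0 < μ K :=
        lt_of_lt_of_le (isOpen_interior.measure_pos μ hKint) (measure_mono interior_subset)
      have hKfin : μ K ≠ ⊤ := hKcomp.measure_lt_top.ne
      set T : E → Set E := fun x => ((2:ℝ)⁻¹ • x) +ᵥ ((2:ℝ)⁻¹ • K) with hT
      have hTmem : ∀ x : E, ∀ z ∈ T x, ∃ k ∈ K, z = (2:ℝ)⁻¹ • x + (2:ℝ)⁻¹ • k := by
        intro x z hz
        rcases hz with ⟨w, ⟨k, hk, rfl⟩, rfl⟩
        exact ⟨k, hk, rfl⟩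
      have hTsub : ∀ x ∈ S, T x ⊆ K := by
        intro x hx z hz
        rcases hTmem x z hz with ⟨k, hk, rfl⟩
        have hxK : x ∈ K := subset_convexHull ℝ _ hx
        have := hKconv hxK hk (by norm_num) (by norm_num) (by norm_num : (2:ℝ)⁻¹ + 2⁻¹ = 1)
        simpa using this
      have hTconv : ∀ x : E, Convex ℝ (T x) := by
        intro x
        exact (hKconv.smul _).translate _
      have hTμ : ∀ x : E, μ (T x) = ENNReal.ofReal ((2:ℝ)⁻¹ ^ d) * μ K := by
        intro x
        rw [hT]
        simp only []
        rw [measure_vadd, Measure.addHaar_smul]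
        congr 1
        rw [abs_of_pos]
        positivity
      have hTint : ∀ x : E, μ (interior (T x)) = ENNReal.ofReal ((2:ℝ)⁻¹ ^ d) * μ K := by
        intro x
        have hfr : μ (frontier (T x)) = 0 := (hTconv x).addHaar_frontier μ
        have h1 : μ (T x) ≤ μ (interior (T x)) := by
          calc μ (T x) ≤ μ (closure (T x)) := measure_mono subset_closure
          _ ≤ μ (interior (T x) ∪ frontier (T x)) := by
              apply measure_mono
              rw [← closure_eq_interior_union_frontier]
          _ ≤ μ (interior (T x)) + μ (frontier (T x)) := measure_union_le _ _
          _ = μ (interior (T x)) := by rw [hfr, add_zero]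
        have h2 : μ (interior (T x)) ≤ μ (T x) := measure_mono interior_subset
        rw [← hTμ x]
        exact le_antisymm h2 h1
      have hdisj : (S : Set E).PairwiseDisjoint (fun x => interior (T x)) := by
        intro x hx y hy hxy
        rcases hS x hx y hy hxy with ⟨f, _, hgap, hfz⟩
        set m := (f x + f y) / 2 with hm
        have hfK_le : ∀ k ∈ K, f k ≤ f x := by
          intro k hk
          have : K ⊆ {z : E | f z ≤ f x} :=
            convexHull_min (fun z hz => (hfz z hz).2)
              (convex_halfSpace_le (LinearMap.isLinear (f : E →ₗ[ℝ] ℝ)) _)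
          exact this hk
        have hfK_ge : ∀ k ∈ K, f y ≤ f k := by
          intro k hk
          have : K ⊆ {z : E | f y ≤ f z} :=
            convexHull_min (fun z hz => (hfz z hz).1)
              (convex_halfSpace_ge (LinearMap.isLinear (f : E →ₗ[ℝ] ℝ)) _)
          exact this hk
        have hTx : T x ⊆ {z : E | m ≤ f z} := by
          intro z hz
          rcases hTmem x z hz with ⟨k, hk, rfl⟩
          have := hfK_ge k hk
          simp only [Set.mem_setOf_eq, map_add, f.map_smul, smul_eq_mul, hm]
          linarith
        have hTy : T y ⊆ {z : E | f z ≤ m} := by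
          intro z hz
          rcases hTmem y z hz with ⟨k, hk, rfl⟩
          have := hfK_le k hk
          simp only [Set.mem_setOf_eq, map_add, f.map_smul, smul_eq_mul, hm]
          linarith
        have hux : (0:ℝ) < f (x - y) := by
          rw [map_sub]; linarith
        have huy : (0:ℝ) < (-f) (y - x) := by
          simp only [ContinuousLinearMap.neg_apply, map_sub]; linarith
        have hx' : interior (T x) ⊆ {z : E | m < f z} :=
          (interior_mono hTx).trans (interior_le_subset_lt f hux m)
        have hy' : interior (T y) ⊆ {z : E | -m < (-f) z} := by
          refine (interior_mono ?_).trans (interior_le_subset_lt (-f) huy (-m))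
          intro z hz
          have := hTy hz
          simp only [Set.mem_setOf_eq, ContinuousLinearMap.neg_apply] at this ⊢
          linarith
        refine Set.disjoint_left.2 fun z hzx hzy => ?_
        have h1 := hx' hzx
        have h2 := hy' hzy
        simp only [Set.mem_setOf_eq, ContinuousLinearMap.neg_apply] at h1 h2
        linarith
      have hcount : (S.card : ℝ≥0∞) * (ENNReal.ofReal ((2:ℝ)⁻¹ ^ d) * μ K) ≤ μ K := by
        calc (S.card : ℝ≥0∞) * (ENNReal.ofReal ((2:ℝ)⁻¹ ^ d) * μ K)
            = ∑ _x ∈ S, (ENNReal.ofReal ((2:ℝ)⁻¹ ^ d) * μ K) := by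
              rw [Finset.sum_const, nsmul_eq_mul]
          _ = ∑ x ∈ S, μ (interior (T x)) := by
              exact Finset.sum_congr rfl (fun x _ => (hTint x).symm)
          _ = μ (⋃ x ∈ S, interior (T x)) :=
              (measure_biUnion_finset hdisj fun _ _ => isOpen_interior.measurableSet).symm
          _ ≤ μ K := by
              apply measure_mono
              intro z hz
              simp only [Set.mem_iUnion] at hz
              rcases hz with ⟨x, hx, hz⟩
              exact hTsub x hx (interior_subset hz)
      have hc2 : ENNReal.ofReal ((2:ℝ)⁻¹ ^ d) = ((2:ℝ≥0∞) ^ d)⁻¹ := by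
        rw [ENNReal.ofReal_pow (by norm_num), ENNReal.ofReal_inv_of_pos (by norm_num)]
        rw [ENNReal.inv_pow]
        norm_num
      rw [hc2] at hcount
      have hμK1 : (S.card : ℝ≥0∞) * ((2:ℝ≥0∞) ^ d)⁻¹ ≤ 1 := by
        have := hcount
        rw [← mul_assoc] at this
        have h1 : (S.card : ℝ≥0∞) * ((2:ℝ≥0∞) ^ d)⁻¹ * μ K ≤ 1 * μ K := by
          rw [one_mul]; exact this
        exact (ENNReal.mul_le_mul_iff_left hK0.ne' hKfin).1 h1
      have hfinal : (S.card : ℝ≥0∞) ≤ (2:ℝ≥0∞) ^ d := by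
        have := ENNReal.le_inv_iff_mul_le.2 hμK1
        rwa [inv_inv] at this
      have : (S.card : ℝ≥0∞) ≤ ((2 ^ d : ℕ) : ℝ≥0∞) := by
        rwa [Nat.cast_pow, Nat.cast_ofNat]
      exact_mod_cast this
    · rcases S.eq_empty_or_nonempty with rfl | ⟨x0, hx0⟩
      · simp
      set V := vectorSpan ℝ (S : Set E) with hV
      have hVne : V ≠ ⊤ := by
        intro h
        exact htop ((AffineSubspace.affineSpan_eq_top_iff_vectorSpan_eq_top_of_nonempty ℝ E E
          ⟨x0, Finset.mem_coe.2 hx0⟩).2 h)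
      have hdim : finrank ℝ V < finrank ℝ E :=
        Submodule.finrank_lt hVne
      have hmemV : ∀ x ∈ S, x - x0 ∈ V := fun x hx => by
        simpa using vsub_mem_vectorSpan ℝ (Finset.mem_coe.2 hx) (Finset.mem_coe.2 hx0)
      set φ : {x // x ∈ S} → V := fun x => ⟨x.1 - x0, hmemV x.1 x.2⟩ with hφ
      have hφinj : Function.Injective φ := by
        intro a b hab
        apply Subtype.ext
        have := congrArg Subtype.val hab
        simpa [hφ, sub_left_inj] using this
      set S' : Finset V := S.attach.image φ with hS'
      have hcard : S'.card = S.card := by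
        rw [hS', Finset.card_image_of_injective _ hφinj, Finset.card_attach]
      have hS'prop : AntipProp (S' : Set V) := by
        intro u hu v hv huv
        rcases Finset.mem_image.1 (Finset.mem_coe.1 hu) with ⟨a, _, rfl⟩
        rcases Finset.mem_image.1 (Finset.mem_coe.1 hv) with ⟨b, _, rfl⟩
        have hab : a.1 ≠ b.1 := fun h => huv (by rw [hφ]; exact Subtype.ext (by simp [h]))
        rcases hS a.1 a.2 b.1 b.2 hab with ⟨f, hf1, hgap, hfz⟩
        refine ⟨f.comp V.subtypeL, ?_, ?_, ?_⟩
        · refine ContinuousLinearMap.opNorm_le_bound _ zero_le_one (fun w => ?_)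
          calc ‖f (V.subtypeL w)‖ ≤ ‖f‖ * ‖(w : E)‖ := f.le_opNorm _
          _ ≤ 1 * ‖w‖ := mul_le_mul_of_nonneg_right hf1 (norm_nonneg _)
        · simp only [ContinuousLinearMap.comp_apply, hφ, Submodule.subtypeL_apply, map_sub]
          linarith
        · intro z hz
          rcases Finset.mem_image.1 (Finset.mem_coe.1 hz) with ⟨c, _, rfl⟩
          have h1 := (hfz c.1 c.2).1
          have h2 := (hfz c.1 c.2).2
          have h3 := (hfz a.1 a.2)
          have h4 := (hfz b.1 b.2)
          simp only [ContinuousLinearMap.comp_apply, hφ, Submodule.subtypeL_apply, map_sub]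
          constructor <;> linarith
      have hVN : finrank ℝ V ≤ N := by omega
      calc S.card = S'.card := hcard.symm
        _ ≤ 2 ^ finrank ℝ V := ih V hVN S' hS'prop
        _ ≤ 2 ^ finrank ℝ E := Nat.pow_le_pow_right (by norm_num) hdim.le

/-- Coordinates are bounded by the `ℓ^p` norm. -/
lemma pilp_apply_le_norm {n : ℕ} {q : ℝ≥0∞} [Fact (1 ≤ q)] (hq : 0 < q.toReal)
    (x : PiLp q (fun _ : Fin n => ℝ)) (i : Fin n) : ‖x i‖ ≤ ‖x‖ := by
  rw [PiLp.norm_eq_sum hq]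
  have h0 : ∀ j, (0:ℝ) ≤ ‖x j‖ ^ q.toReal := fun j => Real.rpow_nonneg (norm_nonneg _) _
  have h1 : ‖x i‖ ^ q.toReal ≤ ∑ j, ‖x j‖ ^ q.toReal :=
    Finset.single_le_sum (fun j _ => h0 j) (Finset.mem_univ i)
  have h2 : (‖x i‖ ^ q.toReal) ^ (1/q.toReal) ≤ (∑ j, ‖x j‖ ^ q.toReal) ^ (1/q.toReal) :=
    Real.rpow_le_rpow (h0 i) h1 (by positivity)
  rw [one_div, Real.rpow_rpow_inv (norm_nonneg _) (ne_of_gt hq)] at h2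
  rwa [one_div]

/-- For `n ≥ 2` and `log₂ n < p < ∞`, one has
`H'_α(ℓ_p^n) = 2^n = H_α(ℓ_p^n)`; moreover the scaled sign-vector set
`S' = n^{-1/p}·{−1,1}^n` is a bounded and separated antipodal subset of the unit sphere
of `ℓ_p^n` of cardinality `2^n`, with constant `d = 2/n^{1/p} > 1`. -/
theorem strictHalpha_lp_eq_of_logb_lt (n : ℕ) (hn : 2 ≤ n) (p : ℝ) (hp : 1 < p)
    (hplog : Real.logb 2 n < p) [Fact (1 ≤ ENNReal.ofReal p)]
    (S : Finset (PiLp (ENNReal.ofReal p) (fun _ : Fin n => ℝ)))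
    (hS : S = Finset.image
      (fun σ : Fin n → Bool =>
        (WithLp.equiv (ENNReal.ofReal p) (∀ _ : Fin n, ℝ)).symm
          (fun i => (if σ i then 1 else -1) * ((n : ℝ) ^ (1 / p))⁻¹))
      Finset.univ) :
    S.card = 2 ^ n ∧
    (S : Set (PiLp (ENNReal.ofReal p) (fun _ : Fin n => ℝ))) ⊆ sphere 0 1 ∧
    1 < 2 / (n : ℝ) ^ (1 / p) ∧
    IsBSA (S : Set (PiLp (ENNReal.ofReal p) (fun _ : Fin n => ℝ))) (2 / (n : ℝ) ^ (1 / p)) ∧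
    strictHalpha (PiLp (ENNReal.ofReal p) (fun _ : Fin n => ℝ)) = 2 ^ n ∧
    Halpha (PiLp (ENNReal.ofReal p) (fun _ : Fin n => ℝ)) = 2 ^ n := by
  subst hS
  have hp0 : (0:ℝ) < p := lt_trans one_pos hp
  have hq : (ENNReal.ofReal p).toReal = p := ENNReal.toReal_ofReal hp0.le
  have hnpos : (0:ℝ) < n := by exact_mod_cast Nat.lt_of_lt_of_le Nat.zero_lt_two hn
  set c : ℝ := ((n : ℝ) ^ (1 / p))⁻¹ with hc
  have hrp : (0:ℝ) < (n : ℝ) ^ (1 / p) := Real.rpow_pos_of_pos hnpos _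
  have hcpos : 0 < c := by positivity
  set E := PiLp (ENNReal.ofReal p) (fun _ : Fin n => ℝ) with hE
  set g : (Fin n → Bool) → E := fun σ =>
    (WithLp.equiv (ENNReal.ofReal p) (∀ _ : Fin n, ℝ)).symm
      (fun i => (if σ i then 1 else -1) * c) with hg
  have hgco : ∀ σ i, g σ i = (if σ i then 1 else -1) * c := by
    intro σ i
    rw [hg]
    rfl
  have hginj : Function.Injective g := by
    intro σ τ h
    funext i
    have h1 : g σ i = g τ i := congrArg (fun w : E => w i) h
    rw [hgco, hgco] at h1
    have h2 : (if σ i then (1:ℝ) else -1) = (if τ i then (1:ℝ) else -1) :=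
      mul_right_cancel₀ (ne_of_gt hcpos) h1
    cases hσ : σ i <;> cases hτ : τ i <;> simp [hσ, hτ] at h2 ⊢ <;> norm_num at h2
  have hcp : c ^ p = (n : ℝ)⁻¹ := by
    rw [hc, Real.inv_rpow (Real.rpow_nonneg hnpos.le _), ← Real.rpow_mul hnpos.le,
      one_div_mul_cancel (ne_of_gt hp0), Real.rpow_one]
  have hnorm : ∀ σ, ‖g σ‖ = 1 := by
    intro σ
    rw [PiLp.norm_eq_sum (by rw [hq]; exact hp0)]
    have hco : ∀ i, ‖g σ i‖ = c := by
      intro i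
      rw [hgco, Real.norm_eq_abs]
      cases hσ : σ i <;> simp [abs_of_pos hcpos]
    have hsum : ∑ i, ‖g σ i‖ ^ (ENNReal.ofReal p).toReal = (n : ℝ) * c ^ p := by
      rw [hq]
      calc ∑ i : Fin n, ‖g σ i‖ ^ p = ∑ _i : Fin n, c ^ p := by
            refine Finset.sum_congr rfl (fun i _ => ?_)
            rw [hco]
        _ = (n : ℝ) * c ^ p := by
            rw [Finset.sum_const, Finset.card_univ, Fintype.card_fin, nsmul_eq_mul]
    rw [hsum, hq, hcp, mul_inv_cancel₀ (ne_of_gt hnpos), Real.one_rpow]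
  have hlt2 : (n : ℝ) ^ (1 / p) < 2 := by
    have h1 : (n:ℝ) = (2:ℝ) ^ Real.logb 2 n := (Real.rpow_logb two_pos (by norm_num) hnpos).symm
    calc (n : ℝ) ^ (1 / p) = ((2:ℝ) ^ Real.logb 2 n) ^ (1/p) := by rw [← h1]
      _ = (2:ℝ) ^ (Real.logb 2 n * (1/p)) := by
            rw [← Real.rpow_mul (by norm_num : (0:ℝ) ≤ 2)]
      _ < (2:ℝ) ^ (1:ℝ) := by
            apply (Real.rpow_lt_rpow_left_iff (by norm_num : (1:ℝ) < 2)).2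
            rw [mul_one_div, div_lt_one hp0]
            exact hplog
      _ = 2 := Real.rpow_one 2
  have hd1 : 1 < 2 / (n : ℝ) ^ (1 / p) := (one_lt_div hrp).2 hlt2
  -- the coordinate functionals
  set f0 : Fin n → (E →L[ℝ] ℝ) := fun i =>
    (ContinuousLinearMap.proj i).comp
      (PiLp.continuousLinearEquiv (ENNReal.ofReal p) ℝ
        (fun _ : Fin n => ℝ)).toContinuousLinearMap with hf0
  have hf0app : ∀ (i : Fin n) (w : E), f0 i w = w i := fun i w => rfl
  -- the key antipodality statement
  have key : ∀ x ∈ ((Finset.image g Finset.univ : Finset E) : Set E),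
      ∀ y ∈ ((Finset.image g Finset.univ : Finset E) : Set E), x ≠ y →
      ∃ f : E →L[ℝ] ℝ, ‖f‖ ≤ 1 ∧ f x - f y = 2 / (n : ℝ) ^ (1 / p) ∧
        ∀ z ∈ ((Finset.image g Finset.univ : Finset E) : Set E), f y ≤ f z ∧ f z ≤ f x := by
    intro x hx y hy hxy
    rcases Finset.mem_image.1 (Finset.mem_coe.1 hx) with ⟨σ, -, rfl⟩
    rcases Finset.mem_image.1 (Finset.mem_coe.1 hy) with ⟨τ, -, rfl⟩
    have hστ : σ ≠ τ := fun h => hxy (by rw [h])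
    obtain ⟨i, hi⟩ : ∃ i, σ i ≠ τ i := by
      by_contra h
      push_neg at h
      exact hστ (funext h)
    set ε : ℝ := if σ i then 1 else -1 with hε
    have hval : ∀ ρ : Fin n → Bool, (ε • f0 i) (g ρ) = (if σ i = ρ i then c else -c) := by
      intro ρ
      rw [ContinuousLinearMap.smul_apply, hf0app, hgco, smul_eq_mul]
      cases hσ : σ i <;> cases hρ : ρ i <;> simp [hε, hσ, hρ]
    refine ⟨ε • f0 i, ?_, ?_, ?_⟩
    · refine ContinuousLinearMap.opNorm_le_bound _ zero_le_one (fun w => ?_)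
      rw [ContinuousLinearMap.smul_apply, hf0app, norm_smul, Real.norm_eq_abs, one_mul]
      have hε1 : |ε| = 1 := by cases hσ : σ i <;> simp [hε, hσ]
      rw [hε1, one_mul]
      exact pilp_apply_le_norm (by rw [hq]; exact hp0) w i
    · rw [hval σ, hval τ, if_pos rfl, if_neg hi, hc]
      ring
    · intro z hz
      rcases Finset.mem_image.1 (Finset.mem_coe.1 hz) with ⟨ρ, -, rfl⟩
      rw [hval σ, hval τ, hval ρ, if_pos rfl, if_neg hi]
      by_cases h : σ i = ρ i <;> simp [h] <;> linarith
  have hcard : (Finset.image g Finset.univ : Finset E).card = 2 ^ n := by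
    rw [Finset.card_image_of_injective _ hginj, Finset.card_univ]
    simp [Fintype.card_fun]
  have hsph : ((Finset.image g Finset.univ : Finset E) : Set E) ⊆ sphere 0 1 := by
    intro x hx
    rcases Finset.mem_image.1 (Finset.mem_coe.1 hx) with ⟨σ, -, rfl⟩
    rw [mem_sphere_zero_iff_norm]
    exact hnorm σ
  have hstrict : StrictAntipProp ((Finset.image g Finset.univ : Finset E) : Set E) := by
    intro x hx y hy hxy
    rcases key x hx y hy hxy with ⟨f, hf1, hf2, hf3⟩
    exact ⟨f, hf1, by rw [hf2]; exact hd1, hf3⟩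
  have hantip : AntipProp ((Finset.image g Finset.univ : Finset E) : Set E) := by
    intro x hx y hy hxy
    rcases key x hx y hy hxy with ⟨f, hf1, hf2, hf3⟩
    exact ⟨f, hf1, by rw [hf2]; exact hd1.le, hf3⟩
  have hfinrank : finrank ℝ E = n := by
    have h1 : finrank ℝ E = finrank ℝ (∀ _ : Fin n, ℝ) :=
      LinearEquiv.finrank_eq (WithLp.linearEquiv (ENNReal.ofReal p) ℝ (∀ _ : Fin n, ℝ))
    rw [h1, Module.finrank_fin_fun]
  have hboundA : ∀ k ∈ {k : ℕ | ∃ S' : Finset E, S'.card = k ∧ (S' : Set E) ⊆ sphere (0:E) 1 ∧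
      AntipProp (S' : Set E)}, k ≤ 2 ^ n := by
    rintro k ⟨S', rfl, -, hA⟩
    have := antip_card_le (finrank ℝ E) E le_rfl S' hA
    rwa [hfinrank] at this
  have hboundS : ∀ k ∈ {k : ℕ | ∃ S' : Finset E, S'.card = k ∧ (S' : Set E) ⊆ sphere (0:E) 1 ∧
      StrictAntipProp (S' : Set E)}, k ≤ 2 ^ n := by
    rintro k ⟨S', rfl, hsp, hA⟩
    apply hboundA
    refine ⟨S', rfl, hsp, ?_⟩
    intro x hx y hy hxy
    rcases hA x hx y hy hxy with ⟨f, hf1, hf2, hf3⟩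
    exact ⟨f, hf1, hf2.le, hf3⟩
  have hmemS : 2 ^ n ∈ {k : ℕ | ∃ S' : Finset E, S'.card = k ∧ (S' : Set E) ⊆ sphere (0:E) 1 ∧
      StrictAntipProp (S' : Set E)} := ⟨Finset.image g Finset.univ, hcard, hsph, hstrict⟩
  have hmemA : 2 ^ n ∈ {k : ℕ | ∃ S' : Finset E, S'.card = k ∧ (S' : Set E) ⊆ sphere (0:E) 1 ∧
      AntipProp (S' : Set E)} := ⟨Finset.image g Finset.univ, hcard, hsph, hantip⟩
  refine ⟨hcard, hsph, hd1, ?_, ?_, ?_⟩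
  · refine ⟨?_, ?_⟩
    · intro x hx
      have := hsph hx
      rw [mem_sphere_zero_iff_norm] at this
      rw [mem_closedBall_zero_iff, this]
    · intro x hx y hy hxy
      rcases key x hx y hy hxy with ⟨f, hf1, hf2, hf3⟩
      exact ⟨f, hf1, hf2.ge, hf3⟩
  · apply le_antisymm
    · exact csSup_le ⟨2 ^ n, hmemS⟩ hboundS
    · exact le_csSup ⟨2 ^ n, hboundS⟩ hmemS
  · apply le_antisymm
    · exact csSup_le ⟨2 ^ n, hmemA⟩ hboundA
    · exact le_csSup ⟨2 ^ n, hboundA⟩ hmemA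

end
end

section
/- Let n ≥ 2 and 1 < p < ∞ with p ≥ log₂ n. Then H_α(ℓ_p^n) = 2^n; in particular the set S' = n^{-1/p}·{−1,1}^n is a bounded and separated antipodal subset of the unit sphere of ℓ_p^n of cardinality 2^n with constant d = 2/n^{1/p} ≥ 1. -/
open Metric
open scoped Classical

noncomputable section

section Aux

open MeasureTheory Set
open scoped ENNReal Pointwise NNReal

/-- The Danzer–Grünbaum volume argument, full-dimensional case: a finite weakly antipodal
set whose affine span is everything has at most `2 ^ n` points. -/
lemma card_le_of_wa_fulldim (n : ℕ) (S : Finset (Fin n → ℝ))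
    (hS : ∀ x ∈ S, ∀ y ∈ S, x ≠ y → ∃ f : (Fin n → ℝ) →ₗ[ℝ] ℝ,
      f y < f x ∧ ∀ z ∈ S, f y ≤ f z ∧ f z ≤ f x)
    (hspan : affineSpan ℝ (S : Set (Fin n → ℝ)) = ⊤) :
    S.card ≤ 2 ^ n := by
  classical
  set μ : Measure (Fin n → ℝ) := volume with hμ
  set K : Set (Fin n → ℝ) := convexHull ℝ (S : Set (Fin n → ℝ)) with hK
  have hKconv : Convex ℝ K := convex_convexHull ℝ _
  have hKcpt : IsCompact K := S.finite_toSet.isCompact_convexHull ℝ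
  have hint : (interior K).Nonempty := by
    rw [hKconv.interior_nonempty_iff_affineSpan_eq_top, affineSpan_convexHull]
    exact hspan
  have hpos : 0 < μ K := μ.measure_pos_of_nonempty_interior hint
  have htop : μ K < ⊤ := hKcpt.measure_lt_top
  set T : (Fin n → ℝ) → Set (Fin n → ℝ) :=
    fun x => (2⁻¹ : ℝ) • ((fun z => z + x) '' K) with hT
  have hTsub : ∀ x ∈ S, T x ⊆ K := by
    intro x hx z hz
    rcases hz with ⟨w, ⟨a, ha, rfl⟩, rfl⟩
    have hx' : x ∈ K := subset_convexHull ℝ _ hx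
    have := hKconv ha hx' (by norm_num : (0:ℝ) ≤ 2⁻¹) (by norm_num : (0:ℝ) ≤ 2⁻¹) (by norm_num)
    simpa [smul_add] using this
  have hTcpt : ∀ x, IsCompact (T x) := fun x =>
    (hKcpt.image (continuous_add_right x)).smul (2⁻¹ : ℝ)
  have hTmeas : ∀ x, μ (T x) = ENNReal.ofReal ((2:ℝ)⁻¹ ^ n) * μ K := by
    intro x
    show μ ((2⁻¹ : ℝ) • ((fun z => z + x) '' K)) = _
    rw [Measure.addHaar_smul, Module.finrank_fin_fun,
      abs_of_nonneg (by positivity : (0:ℝ) ≤ 2⁻¹ ^ n)]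
    congr 1
    rw [Set.image_add_right, measure_preimage_add_right]
  have hbound : ∀ a ∈ K, ∀ (f : (Fin n → ℝ) →ₗ[ℝ] ℝ) (b c : ℝ),
      (∀ z ∈ S, b ≤ f z ∧ f z ≤ c) → b ≤ f a ∧ f a ≤ c := by
    intro a ha f b c hzf
    have : K ⊆ f ⁻¹' Set.Icc b c :=
      convexHull_min (fun z hz => hzf z hz) ((convex_Icc b c).linear_preimage f)
    exact this ha
  have hdisj : ∀ x ∈ S, ∀ y ∈ S, x ≠ y → μ (T x ∩ T y) = 0 := by
    intro x hx y hy hxy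
    obtain ⟨f, hflt, hf⟩ := hS x hx y hy hxy
    set c : ℝ := (f x + f y) / 2 with hc
    have hne : f x - f y ≠ 0 := sub_ne_zero.2 hflt.ne'
    have hsub : T x ∩ T y ⊆ f ⁻¹' {c} := by
      rintro z ⟨hz1, hz2⟩
      rcases hz1 with ⟨w, ⟨a, ha, rfl⟩, rfl⟩
      have e1 : f ((2⁻¹ : ℝ) • (a + x)) = (f a + f x) / 2 := by
        rw [_root_.map_smul, map_add, smul_eq_mul]; ring
      have hfa := hbound a ha f (f y) (f x) hf
      have hge : c ≤ f ((2⁻¹ : ℝ) • (a + x)) := by rw [e1, hc]; linarith [hfa.1]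
      have hle : f ((2⁻¹ : ℝ) • (a + x)) ≤ c := by
        rcases hz2 with ⟨w', ⟨b, hb, rfl⟩, hww⟩
        have e2 : f ((2⁻¹ : ℝ) • (b + y)) = (f b + f y) / 2 := by
          rw [_root_.map_smul, map_add, smul_eq_mul]; ring
        have hfb := hbound b hb f (f y) (f x) hf
        have hww' : (2⁻¹:ℝ) • (b + y) = (2⁻¹:ℝ) • (a + x) := hww
        rw [← hww', e2, hc]; linarith [hfb.2]
      exact le_antisymm hle hge
    set z₀ : Fin n → ℝ := (c / (f x - f y)) • (x - y) with hz₀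
    have hfz₀ : f z₀ = c := by
      rw [hz₀, _root_.map_smul, map_sub, smul_eq_mul, div_mul_cancel₀ _ hne]
    have hsub2 : f ⁻¹' {c} ⊆ (AffineSubspace.mk' z₀ (LinearMap.ker f) : Set (Fin n → ℝ)) := by
      intro z hz
      rw [SetLike.mem_coe, AffineSubspace.mem_mk']
      simp only [vsub_eq_sub, LinearMap.mem_ker, map_sub, hfz₀]
      simp only [Set.mem_preimage, Set.mem_singleton_iff] at hz
      rw [hz, sub_self]
    have hne_top : AffineSubspace.mk' z₀ (LinearMap.ker f) ≠ ⊤ := by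
      intro h
      have : LinearMap.ker f = ⊤ := by
        have := congrArg AffineSubspace.direction h
        rwa [AffineSubspace.direction_mk', AffineSubspace.direction_top] at this
      have : f (x - y) = 0 := by
        rw [← LinearMap.mem_ker, this]; trivial
      rw [map_sub] at this
      exact hne this
    exact measure_mono_null (hsub.trans hsub2) (Measure.addHaar_affineSubspace μ _ hne_top)
  have hmeas : ∀ x ∈ S, NullMeasurableSet (T x) μ :=
    fun x _ => (hTcpt x).isClosed.measurableSet.nullMeasurableSet
  have hpw : (S : Set (Fin n → ℝ)).Pairwise (Function.onFun (AEDisjoint μ) T) := by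
    intro x hx y hy hxy
    exact hdisj x hx y hy hxy
  have hsum : ∑ x ∈ S, μ (T x) = μ (⋃ x ∈ S, T x) :=
    (measure_biUnion_finset₀ hpw hmeas).symm
  have hunion : μ (⋃ x ∈ S, T x) ≤ μ K :=
    measure_mono (Set.iUnion₂_subset hTsub)
  have hsum' : (S.card : ℝ≥0∞) * (ENNReal.ofReal ((2:ℝ)⁻¹ ^ n) * μ K) ≤ μ K := by
    calc (S.card : ℝ≥0∞) * (ENNReal.ofReal ((2:ℝ)⁻¹ ^ n) * μ K)
        = ∑ x ∈ S, μ (T x) := by rw [Finset.sum_congr rfl (fun x _ => hTmeas x),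
          Finset.sum_const, nsmul_eq_mul]
      _ = μ (⋃ x ∈ S, T x) := hsum
      _ ≤ μ K := hunion
  have h2 : ENNReal.ofReal ((2:ℝ)⁻¹ ^ n) = ((2:ℝ≥0∞) ^ n)⁻¹ := by
    rw [ENNReal.ofReal_pow (by norm_num), ENNReal.ofReal_inv_of_pos (by norm_num),
      ENNReal.inv_pow]
    norm_num
  rw [h2, ← mul_assoc] at hsum'
  have h2n0 : ((2:ℝ≥0∞) ^ n) ≠ 0 := by positivity
  have h2nt : ((2:ℝ≥0∞) ^ n) ≠ ⊤ := ENNReal.pow_ne_top (by norm_num)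
  have hstep : (S.card : ℝ≥0∞) * ((2:ℝ≥0∞)^n)⁻¹ ≤ 1 :=
    (ENNReal.mul_le_mul_iff_left hpos.ne' htop.ne).1 (by simpa using hsum')
  have hcard : (S.card : ℝ≥0∞) ≤ (2:ℝ≥0∞)^n := by
    have h := mul_le_mul_left hstep ((2:ℝ≥0∞)^n)
    rwa [mul_assoc, ENNReal.inv_mul_cancel h2n0 h2nt, mul_one, one_mul] at h
  have : (S.card : ℝ≥0∞) ≤ ((2^n : ℕ) : ℝ≥0∞) := by
    rwa [Nat.cast_pow, Nat.cast_ofNat]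
  exact_mod_cast this

/-- The Danzer–Grünbaum bound: a finite weakly antipodal set in `ℝ^n`
has at most `2 ^ n` points. -/
lemma card_le_of_wa (n : ℕ) : ∀ (S : Finset (Fin n → ℝ)),
    (∀ x ∈ S, ∀ y ∈ S, x ≠ y → ∃ f : (Fin n → ℝ) →ₗ[ℝ] ℝ,
      f y < f x ∧ ∀ z ∈ S, f y ≤ f z ∧ f z ≤ f x) → S.card ≤ 2 ^ n := by
  induction n with
  | zero =>
    intro S _
    have : S.card ≤ 1 := Finset.card_le_one.mpr (fun a _ b _ => Subsingleton.elim a b)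
    simpa using this
  | succ m ih =>
    intro S hS
    by_cases hspan : affineSpan ℝ (S : Set (Fin (m+1) → ℝ)) = ⊤
    · exact card_le_of_wa_fulldim _ S hS hspan
    rcases S.eq_empty_or_nonempty with rfl | ⟨s₀, hs₀⟩
    · simp
    have hV : vectorSpan ℝ (S : Set (Fin (m+1) → ℝ)) < ⊤ :=
      lt_top_iff_ne_top.2 (fun h => hspan
        ((AffineSubspace.affineSpan_eq_top_iff_vectorSpan_eq_top_of_nonempty ℝ _ _
          ⟨s₀, hs₀⟩).2 h))
    obtain ⟨φ, hφ0, hφmap⟩ :=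
      Submodule.exists_dual_map_eq_bot_of_lt_top hV inferInstance
    have hφvan : ∀ v ∈ vectorSpan ℝ (S : Set (Fin (m+1) → ℝ)), φ v = 0 := by
      intro v hv
      have : φ v ∈ (vectorSpan ℝ (S : Set (Fin (m+1) → ℝ))).map φ :=
        Submodule.mem_map_of_mem hv
      rw [hφmap] at this
      exact this
    have hconst : ∀ z ∈ S, φ z = φ s₀ := by
      intro z hz
      have h := hφvan (z - s₀) (vsub_mem_vectorSpan ℝ hz hs₀)
      rw [map_sub] at h
      linarith
    set e : Fin (m+1) → (Fin (m+1) → ℝ) := fun i k => if i = k then 1 else 0 with he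
    obtain ⟨j, hj⟩ : ∃ j, φ (e j) ≠ 0 := by
      by_contra h
      push_neg at h
      apply hφ0
      apply LinearMap.ext
      intro x
      rw [LinearMap.pi_apply_eq_sum_univ φ x]
      have h' : ∀ i, φ (fun k => if i = k then (1:ℝ) else 0) = 0 := fun i => h i
      simp [h']
    set Tm : (Fin (m+1) → ℝ) → (Fin m → ℝ) := fun z => z ∘ j.succAbove with hTm
    have hinj : Set.InjOn Tm (S : Set (Fin (m+1) → ℝ)) := by
      intro a ha b hb hab
      have h1 : ∀ i, i ≠ j → a i = b i := by
        intro i hi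
        obtain ⟨k, rfl⟩ := Fin.exists_succAbove_eq hi
        exact congrFun hab k
      have hab' : a - b = (a j - b j) • e j := by
        funext i
        by_cases hij : i = j
        · subst hij; simp [he]
        · have hji : ¬ j = i := fun h' => hij h'.symm
          simp [he, h1 i hij, hji]
      have h3 : φ (a - b) = 0 := hφvan (a - b) (vsub_mem_vectorSpan ℝ ha hb)
      rw [hab', _root_.map_smul, smul_eq_mul, mul_eq_zero] at h3
      have h4 : a j = b j := by
        rcases h3 with h3 | h3
        · linarith [sub_eq_zero.1 (by linarith : a j - b j = 0)]
        · exact absurd h3 hj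
      funext i
      by_cases hij : i = j
      · subst hij; exact h4
      · exact h1 i hij
    set S' : Finset (Fin m → ℝ) := S.image Tm with hS'
    have hcard : S'.card = S.card := Finset.card_image_of_injOn hinj
    have hS'wa : ∀ x' ∈ S', ∀ y' ∈ S', x' ≠ y' → ∃ f : (Fin m → ℝ) →ₗ[ℝ] ℝ,
        f y' < f x' ∧ ∀ z' ∈ S', f y' ≤ f z' ∧ f z' ≤ f x' := by
      intro x' hx' y' hy' hne
      obtain ⟨x, hx, rfl⟩ := Finset.mem_image.1 hx'
      obtain ⟨y, hy, rfl⟩ := Finset.mem_image.1 hy'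
      have hxy : x ≠ y := fun h => hne (by rw [h])
      obtain ⟨f, hflt, hf⟩ := hS x hx y hy hxy
      set g : (Fin (m+1) → ℝ) →ₗ[ℝ] ℝ := f - (f (e j) / φ (e j)) • φ with hg
      have hgej : g (e j) = 0 := by
        simp only [hg, LinearMap.sub_apply, LinearMap.smul_apply, smul_eq_mul]
        field_simp
        ring
      set f' : (Fin m → ℝ) →ₗ[ℝ] ℝ :=
        ∑ k : Fin m, g (e (j.succAbove k)) • (LinearMap.proj k : (Fin m → ℝ) →ₗ[ℝ] ℝ) with hf'
      have hf'T : ∀ z : Fin (m+1) → ℝ, f' (Tm z) = g z := by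
        intro z
        have h1 : f' (Tm z) = ∑ k : Fin m, g (e (j.succAbove k)) * z (j.succAbove k) := by
          rw [hf']
          simp [LinearMap.sum_apply, LinearMap.smul_apply, LinearMap.proj_apply, hTm,
            Function.comp]
        have h2 : g z = ∑ i, z i • g (e i) := by
          rw [LinearMap.pi_apply_eq_sum_univ g z]
        rw [h1, h2, Fin.sum_univ_succAbove (fun i => z i • g (e i)) j, hgej]
        simp [mul_comm]
      have hgS : ∀ z ∈ S, g z = f z - (f (e j) / φ (e j)) * φ s₀ := by
        intro z hz
        simp only [hg, LinearMap.sub_apply, LinearMap.smul_apply, smul_eq_mul, hconst z hz]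
      refine ⟨f', ?_, ?_⟩
      · rw [hf'T, hf'T, hgS x hx, hgS y hy]
        linarith
      · intro z' hz'
        obtain ⟨z, hz, rfl⟩ := Finset.mem_image.1 hz'
        rw [hf'T, hf'T, hf'T, hgS x hx, hgS y hy, hgS z hz]
        obtain ⟨hl, hr⟩ := hf z hz
        constructor <;> linarith
    calc S.card = S'.card := hcard.symm
      _ ≤ 2 ^ m := ih S' hS'wa
      _ ≤ 2 ^ (m+1) := by norm_num [pow_succ]

/-- Transfer of the Danzer–Grünbaum bound to `ℓ_q^n`. -/
lemma card_le_of_antip (n : ℕ) (q : ℝ≥0∞) [Fact (1 ≤ q)]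
    (S : Finset (PiLp q (fun _ : Fin n => ℝ)))
    (hA : ∀ x ∈ S, ∀ y ∈ S, x ≠ y → ∃ f : PiLp q (fun _ : Fin n => ℝ) →L[ℝ] ℝ,
      ‖f‖ ≤ 1 ∧ 1 ≤ f x - f y ∧ ∀ z ∈ (S : Set (PiLp q (fun _ : Fin n => ℝ))),
        f y ≤ f z ∧ f z ≤ f x) :
    S.card ≤ 2 ^ n := by
  classical
  set ψ : PiLp q (fun _ : Fin n => ℝ) ≃ₗ[ℝ] (Fin n → ℝ) :=
    WithLp.linearEquiv q ℝ (∀ _ : Fin n, ℝ) with hψ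
  set S' : Finset (Fin n → ℝ) := S.image (fun z => ψ z) with hS'
  have hcard : S'.card = S.card :=
    Finset.card_image_of_injective _ (fun a b hab => ψ.injective hab)
  rw [← hcard]
  apply card_le_of_wa
  intro x' hx' y' hy' hne
  obtain ⟨x, hx, rfl⟩ := Finset.mem_image.1 hx'
  obtain ⟨y, hy, rfl⟩ := Finset.mem_image.1 hy'
  have hxy : x ≠ y := fun h => hne (by rw [h])
  obtain ⟨f, _, hgap, hf⟩ := hA x hx y hy hxy
  refine ⟨(f : PiLp q (fun _ : Fin n => ℝ) →ₗ[ℝ] ℝ).comp (ψ.symm :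
    (Fin n → ℝ) →ₗ[ℝ] PiLp q (fun _ : Fin n => ℝ)), ?_, ?_⟩
  · simp only [LinearMap.comp_apply, LinearEquiv.coe_coe, LinearEquiv.symm_apply_apply,
      ContinuousLinearMap.coe_coe]
    linarith
  · intro z' hz'
    obtain ⟨z, hz, rfl⟩ := Finset.mem_image.1 hz'
    simp only [LinearMap.comp_apply, LinearEquiv.coe_coe, LinearEquiv.symm_apply_apply,
      ContinuousLinearMap.coe_coe]
    exact hf z hz

/-- Coordinate bound in `ℓ_p^n`. -/
lemma abs_apply_le_norm (n : ℕ) (p : ℝ) [Fact (1 ≤ ENNReal.ofReal p)] (hp : 1 < p)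
    (z : PiLp (ENNReal.ofReal p) (fun _ : Fin n => ℝ)) (i : Fin n) :
    |z i| ≤ ‖z‖ := by
  have hp0 : 0 < p := by linarith
  have hqt : (ENNReal.ofReal p).toReal = p := ENNReal.toReal_ofReal hp0.le
  rw [PiLp.norm_eq_sum (by rw [hqt]; exact hp0), hqt]
  have h1 : |z i| ^ p ≤ ∑ j, ‖z j‖ ^ p := by
    rw [← Real.norm_eq_abs]
    exact Finset.single_le_sum (f := fun j => ‖z j‖ ^ p)
      (fun j _ => Real.rpow_nonneg (norm_nonneg _) p) (Finset.mem_univ i)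
  have h2 : (|z i| ^ p) ^ (1/p) ≤ (∑ j, ‖z j‖ ^ p) ^ (1/p) :=
    Real.rpow_le_rpow (Real.rpow_nonneg (abs_nonneg _) p) h1 (by positivity)
  rwa [← Real.rpow_mul (abs_nonneg _), mul_one_div_cancel hp0.ne', Real.rpow_one] at h2

/-- The scaled sign vectors lie on the unit sphere of `ℓ_p^n`. -/
lemma norm_signvec (n : ℕ) (p : ℝ) [Fact (1 ≤ ENNReal.ofReal p)] (hn : 2 ≤ n) (hp : 1 < p)
    (σ : Fin n → Bool) :
    ‖(WithLp.equiv (ENNReal.ofReal p) (∀ _ : Fin n, ℝ)).symm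
      (fun i => (if σ i then 1 else -1) * ((n : ℝ) ^ (1 / p))⁻¹)‖ = 1 := by
  have hp0 : 0 < p := by linarith
  have hqt : (ENNReal.ofReal p).toReal = p := ENNReal.toReal_ofReal hp0.le
  have hn0 : (0:ℝ) < n := by positivity
  have hc0 : (0:ℝ) < ((n : ℝ) ^ (1 / p))⁻¹ := by positivity
  rw [PiLp.norm_eq_sum (by rw [hqt]; exact hp0), hqt]
  have hcoord : ∀ i : Fin n,
      ‖((WithLp.equiv (ENNReal.ofReal p) (∀ _ : Fin n, ℝ)).symm
        (fun i => (if σ i then 1 else -1) * ((n : ℝ) ^ (1 / p))⁻¹)) i‖ ^ p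
        = ((n : ℝ) ^ (1 / p))⁻¹ ^ p := by
    intro i
    rw [WithLp.equiv_symm_apply, PiLp.toLp_apply]
    rw [Real.norm_eq_abs, abs_mul, abs_of_pos hc0]
    rcases Bool.dichotomy (σ i) with h | h <;> simp [h]
  rw [Finset.sum_congr rfl (fun i _ => hcoord i), Finset.sum_const]
  have hcp : ((n : ℝ) ^ (1 / p))⁻¹ ^ p = (n:ℝ)⁻¹ := by
    rw [Real.inv_rpow (Real.rpow_nonneg hn0.le _), ← Real.rpow_mul hn0.le,
      one_div_mul_cancel hp0.ne', Real.rpow_one]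
  rw [hcp, nsmul_eq_mul, Finset.card_univ, Fintype.card_fin,
    mul_inv_cancel₀ hn0.ne', Real.one_rpow]

end Aux

/-- For `n ≥ 2` and `1 < p < ∞` with `p ≥ log₂ n`, one has
`H_α(ℓ_p^n) = 2^n`; moreover the scaled sign-vector set `S' = n^{-1/p}·{−1,1}^n` is a
bounded and separated antipodal subset of the unit sphere of `ℓ_p^n` of cardinality
`2^n`, with constant `d = 2/n^{1/p} ≥ 1`. -/
theorem Halpha_lp_eq_of_logb_le (n : ℕ) (hn : 2 ≤ n) (p : ℝ) (hp : 1 < p)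
    (hplog : Real.logb 2 n ≤ p) [Fact (1 ≤ ENNReal.ofReal p)]
    (S : Finset (PiLp (ENNReal.ofReal p) (fun _ : Fin n => ℝ)))
    (hS : S = Finset.image
      (fun σ : Fin n → Bool =>
        (WithLp.equiv (ENNReal.ofReal p) (∀ _ : Fin n, ℝ)).symm
          (fun i => (if σ i then 1 else -1) * ((n : ℝ) ^ (1 / p))⁻¹))
      Finset.univ) :
    S.card = 2 ^ n ∧
    (S : Set (PiLp (ENNReal.ofReal p) (fun _ : Fin n => ℝ))) ⊆ sphere 0 1 ∧
    1 ≤ 2 / (n : ℝ) ^ (1 / p) ∧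
    IsBSA (S : Set (PiLp (ENNReal.ofReal p) (fun _ : Fin n => ℝ))) (2 / (n : ℝ) ^ (1 / p)) ∧
    Halpha (PiLp (ENNReal.ofReal p) (fun _ : Fin n => ℝ)) = 2 ^ n := by
  classical
  subst hS
  have hp0 : 0 < p := by linarith
  have hn0 : (0:ℝ) < n := by positivity
  have hc0 : (0:ℝ) < ((n : ℝ) ^ (1 / p))⁻¹ := by positivity
  set c : ℝ := ((n : ℝ) ^ (1 / p))⁻¹ with hc
  set vec : (Fin n → Bool) → PiLp (ENNReal.ofReal p) (fun _ : Fin n => ℝ) :=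
    fun σ => (WithLp.equiv (ENNReal.ofReal p) (∀ _ : Fin n, ℝ)).symm
      (fun i => (if σ i then 1 else -1) * c) with hvec
  have hveci : ∀ σ i, vec σ i = (if σ i then 1 else -1) * c := by
    intro σ i
    rfl
  have hinj : Function.Injective vec := by
    intro σ τ h
    funext i
    have h1 : (if σ i then (1:ℝ) else -1) * c = (if τ i then 1 else -1) * c := by
      rw [← hveci, ← hveci, h]
    have h2 : (if σ i then (1:ℝ) else -1) = (if τ i then 1 else -1) :=
      mul_right_cancel₀ hc0.ne' h1
    rcases Bool.dichotomy (σ i) with hs | hs <;> rcases Bool.dichotomy (τ i) with ht | ht <;>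
      simp [hs, ht] at h2 ⊢ <;> linarith
  have hcard : (Finset.image vec Finset.univ).card = 2 ^ n := by
    rw [Finset.card_image_of_injective _ hinj, Finset.card_univ]
    simp [Fintype.card_fun]
  have hsphere : ((Finset.image vec Finset.univ : Finset _) :
      Set (PiLp (ENNReal.ofReal p) (fun _ : Fin n => ℝ))) ⊆ sphere 0 1 := by
    intro z hz
    simp only [Finset.coe_image, Set.mem_image, Finset.mem_coe] at hz
    obtain ⟨σ, _, rfl⟩ := hz
    rw [mem_sphere_iff_norm, sub_zero]
    exact norm_signvec n p hn hp σ
  have hn2 : (n:ℝ) ^ (1/p) ≤ 2 := by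
    have h1 : (n:ℝ) ≤ 2 ^ p := (Real.logb_le_iff_le_rpow (by norm_num) hn0).1 hplog
    have h2 : ((n:ℝ) ^ (1/p)) ≤ ((2:ℝ) ^ p) ^ (1/p) :=
      Real.rpow_le_rpow hn0.le h1 (by positivity)
    rwa [← Real.rpow_mul (by norm_num) p (1/p), mul_one_div_cancel hp0.ne',
      Real.rpow_one] at h2
  have hd1 : 1 ≤ 2 / (n : ℝ) ^ (1 / p) :=
    (one_le_div (by positivity)).2 hn2
  -- the separating functionals
  have hpair : ∀ x ∈ Finset.image vec Finset.univ, ∀ y ∈ Finset.image vec Finset.univ,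
      x ≠ y → ∃ f : PiLp (ENNReal.ofReal p) (fun _ : Fin n => ℝ) →L[ℝ] ℝ, ‖f‖ ≤ 1 ∧
        2 / (n : ℝ) ^ (1 / p) ≤ f x - f y ∧
        ∀ z ∈ ((Finset.image vec Finset.univ : Finset _) :
          Set (PiLp (ENNReal.ofReal p) (fun _ : Fin n => ℝ))), f y ≤ f z ∧ f z ≤ f x := by
    intro x hx y hy hxy
    obtain ⟨σ, _, rfl⟩ := Finset.mem_image.1 hx
    obtain ⟨τ, _, rfl⟩ := Finset.mem_image.1 hy
    have hστ : σ ≠ τ := fun h => hxy (by rw [h])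
    obtain ⟨i, hi⟩ : ∃ i, σ i ≠ τ i := by
      by_contra h
      push_neg at h
      exact hστ (funext h)
    set s : ℝ := if σ i then 1 else -1 with hs
    set f : PiLp (ENNReal.ofReal p) (fun _ : Fin n => ℝ) →L[ℝ] ℝ :=
      s • PiLp.proj (ENNReal.ofReal p) (fun _ : Fin n => ℝ) i with hf
    have hfz : ∀ z, f z = s * z i := fun z => rfl
    have habs : |s| = 1 := by
      rcases Bool.dichotomy (σ i) with h | h <;> simp [hs, h]
    have hnorm : ‖f‖ ≤ 1 := by
      apply ContinuousLinearMap.opNorm_le_bound _ zero_le_one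
      intro z
      rw [hfz, Real.norm_eq_abs, abs_mul, habs, one_mul, one_mul]
      exact abs_apply_le_norm n p hp z i
    have hfvec : ∀ ρ : Fin n → Bool, f (vec ρ) = (if ρ i = σ i then c else -c) := by
      intro ρ
      rw [hfz, hveci]
      rcases Bool.dichotomy (σ i) with h | h <;> rcases Bool.dichotomy (ρ i) with h' | h' <;>
        simp [hs, h, h']
    have hfx : f (vec σ) = c := by rw [hfvec]; simp
    have hfy : f (vec τ) = -c := by
      rw [hfvec, if_neg (fun h => hi h.symm)]
    refine ⟨f, hnorm, ?_, ?_⟩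
    · rw [hfx, hfy, hc]
      rw [div_eq_mul_inv]
      ring_nf
      linarith
    · intro z hz
      simp only [Finset.coe_image, Set.mem_image, Finset.mem_coe] at hz
      obtain ⟨ρ, _, rfl⟩ := hz
      rw [hfx, hfy, hfvec]
      rcases eq_or_ne (ρ i) (σ i) with h | h
      · rw [if_pos h]; constructor <;> linarith
      · rw [if_neg h]; constructor <;> linarith
  have hIsBSA : IsBSA ((Finset.image vec Finset.univ : Finset _) :
      Set (PiLp (ENNReal.ofReal p) (fun _ : Fin n => ℝ))) (2 / (n : ℝ) ^ (1 / p)) := by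
    constructor
    · exact fun z hz => sphere_subset_closedBall (hsphere hz)
    · intro x hx y hy hxy
      exact hpair x hx y hy hxy
  have hAntip : AntipProp ((Finset.image vec Finset.univ : Finset _) :
      Set (PiLp (ENNReal.ofReal p) (fun _ : Fin n => ℝ))) := by
    intro x hx y hy hxy
    obtain ⟨f, h1, h2, h3⟩ := hpair x hx y hy hxy
    exact ⟨f, h1, le_trans hd1 h2, h3⟩
  refine ⟨hcard, hsphere, hd1, hIsBSA, ?_⟩
  -- Halpha computation
  have hub : ∀ k ∈ {k : ℕ | ∃ T : Finset (PiLp (ENNReal.ofReal p) (fun _ : Fin n => ℝ)),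
      T.card = k ∧ (T : Set (PiLp (ENNReal.ofReal p) (fun _ : Fin n => ℝ))) ⊆ sphere 0 1 ∧
      AntipProp (T : Set (PiLp (ENNReal.ofReal p) (fun _ : Fin n => ℝ)))}, k ≤ 2 ^ n := by
    rintro k ⟨T, rfl, _, hTa⟩
    exact card_le_of_antip n (ENNReal.ofReal p) T hTa
  have hmem : 2 ^ n ∈ {k : ℕ | ∃ T : Finset (PiLp (ENNReal.ofReal p) (fun _ : Fin n => ℝ)),
      T.card = k ∧ (T : Set (PiLp (ENNReal.ofReal p) (fun _ : Fin n => ℝ))) ⊆ sphere 0 1 ∧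
      AntipProp (T : Set (PiLp (ENNReal.ofReal p) (fun _ : Fin n => ℝ)))} :=
    ⟨Finset.image vec Finset.univ, hcard, hsphere, hAntip⟩
  exact le_antisymm (csSup_le ⟨2 ^ n, hmem⟩ hub) (le_csSup ⟨2 ^ n, hub⟩ hmem)

end
end

section
/- For every n ≥ 3 and every 1 < p < ∞ one has H'_α(ℓ_p^n) ≥ 4n − 4; that is, there exist 4n − 4 points on the unit sphere of ℓ_p^n forming a bounded and separated antipodal set with some constant d > 1. -/
open Metric

noncomputable section

lemma SHL.pow_mean_aux {p : ℝ} (hp : 1 ≤ p) {u v : ℝ} (hu : 0 ≤ u) (hv : 0 ≤ v) :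
    (u + v) ^ p ≤ 2 ^ (p - 1) * (u ^ p + v ^ p) := by
  have h := NNReal.coe_le_coe.2
    (NNReal.rpow_add_le_mul_rpow_add_rpow (Real.toNNReal u) (Real.toNNReal v) hp)
  push_cast [NNReal.coe_rpow, Real.coe_toNNReal u hu, Real.coe_toNNReal v hv] at h
  exact h

lemma SHL.rpow_rpow_inv {p a : ℝ} (hp : 0 < p) (ha : 0 ≤ a) : (a ^ p) ^ (1/p) = a := by
  rw [← Real.rpow_mul ha, mul_one_div, div_self hp.ne', Real.rpow_one]

lemma SHL.rpow_inv_rpow {p a : ℝ} (hp : 0 < p) (ha : 0 ≤ a) : (a ^ (1/p)) ^ p = a := by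
  rw [← Real.rpow_mul ha, one_div, inv_mul_cancel₀ hp.ne', Real.rpow_one]

variable {n : ℕ} [NeZero n] {p : ℝ}

lemma SHL.norm_rpow_eq (hp : 1 < p) [Fact (1 ≤ ENNReal.ofReal p)]
    (x : PiLp (ENNReal.ofReal p) (fun _ : Fin n => ℝ)) : ‖x‖ = (∑ k, |x k| ^ p) ^ (1/p) := by
  have h0 : (ENNReal.ofReal p).toReal = p := ENNReal.toReal_ofReal (by linarith)
  rw [PiLp.norm_eq_sum (by rw [h0]; linarith)]
  simp [h0]

lemma SHL.coord_abs_le (hp : 1 < p) [Fact (1 ≤ ENNReal.ofReal p)] (i : Fin n)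
    (x : PiLp (ENNReal.ofReal p) (fun _ : Fin n => ℝ)) : |x i| ≤ ‖x‖ := by
  have hp0 : 0 < p := by linarith
  rw [SHL.norm_rpow_eq hp]
  calc |x i| = (|x i| ^ p) ^ (1/p) := (SHL.rpow_rpow_inv hp0 (abs_nonneg _)).symm
    _ ≤ (∑ k, |x k| ^ p) ^ (1/p) :=
        Real.rpow_le_rpow (Real.rpow_nonneg (abs_nonneg _) _)
          (Finset.single_le_sum (fun k _ => Real.rpow_nonneg (abs_nonneg _) _) (Finset.mem_univ i))
          (by positivity)

lemma SHL.two_coord_le (hp : 1 < p) [Fact (1 ≤ ENNReal.ofReal p)] {i j : Fin n} (hij : i ≠ j)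
    (x : PiLp (ENNReal.ofReal p) (fun _ : Fin n => ℝ)) :
    2 ^ (1/p - 1) * (|x i| + |x j|) ≤ ‖x‖ := by
  have hp0 : 0 < p := by linarith
  have hc0 : (0:ℝ) < 2 ^ (1/p - 1) := Real.rpow_pos_of_pos two_pos _
  have key : (2 ^ (1/p - 1) * (|x i| + |x j|)) ^ p ≤ |x i| ^ p + |x j| ^ p := by
    rw [Real.mul_rpow hc0.le (by positivity), ← Real.rpow_mul (by norm_num)]
    have h1 : (1/p - 1) * p = -(p - 1) := by field_simp; ring
    rw [h1]
    have h2 := SHL.pow_mean_aux hp.le (abs_nonneg (x i)) (abs_nonneg (x j))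
    have h3 : (0:ℝ) < 2 ^ (-(p-1)) := Real.rpow_pos_of_pos two_pos _
    have h4 : (2:ℝ) ^ (-(p-1)) * 2 ^ (p-1) = 1 := by
      rw [← Real.rpow_add two_pos]; simp
    calc (2:ℝ) ^ (-(p-1)) * (|x i| + |x j|) ^ p
        ≤ 2 ^ (-(p-1)) * (2 ^ (p-1) * (|x i| ^ p + |x j| ^ p)) :=
          mul_le_mul_of_nonneg_left h2 h3.le
      _ = |x i| ^ p + |x j| ^ p := by rw [← mul_assoc, h4, one_mul]
  calc 2 ^ (1/p - 1) * (|x i| + |x j|)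
      = ((2 ^ (1/p - 1) * (|x i| + |x j|)) ^ p) ^ (1/p) :=
        (SHL.rpow_rpow_inv hp0 (by positivity)).symm
    _ ≤ (|x i| ^ p + |x j| ^ p) ^ (1/p) :=
        Real.rpow_le_rpow (by positivity) key (by positivity)
    _ ≤ ‖x‖ := by
        rw [SHL.norm_rpow_eq hp]
        refine Real.rpow_le_rpow (by positivity) ?_ (by positivity)
        rw [← Finset.sum_pair (f := fun k => |x k| ^ p) hij]
        exact Finset.sum_le_sum_of_subset_of_nonneg (Finset.subset_univ _)
          (fun k _ _ => by positivity)

/-- sign of a boolean -/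
def SHL.bsgn (b : Bool) : ℝ := if b then 1 else -1

lemma SHL.bsgn_abs (b : Bool) : |SHL.bsgn b| = 1 := by cases b <;> simp [SHL.bsgn]
lemma SHL.bsgn_mul_self (b : Bool) : SHL.bsgn b * SHL.bsgn b = 1 := by cases b <;> simp [SHL.bsgn]
lemma SHL.bsgn_mul_ne {a b : Bool} (h : a ≠ b) : SHL.bsgn a * SHL.bsgn b = -1 := by
  cases a <;> cases b <;> simp_all [SHL.bsgn]
lemma SHL.bsgn_inj : Function.Injective SHL.bsgn := by
  intro a b h; cases a <;> cases b <;> simp_all [SHL.bsgn]; all_goals norm_num at h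

def SHL.eta (p : ℝ) : ℝ := (1/2 - 2 ^ (-p))/2
def SHL.sVal (p : ℝ) : ℝ := (1/2 - SHL.eta p) ^ (1/p)
def SHL.tVal (p : ℝ) : ℝ := (1/2 + SHL.eta p) ^ (1/p)

lemma SHL.two_rpow_neg_lt (hp : 1 < p) : (2:ℝ) ^ (-p) < 1/2 := by
  have : (2:ℝ) ^ (-p) < 2 ^ (-1 : ℝ) :=
    Real.rpow_lt_rpow_of_exponent_lt one_lt_two (by linarith)
  rw [show ((-1:ℝ)) = ((-1 : ℤ) : ℝ) by norm_num, Real.rpow_intCast, zpow_neg_one] at this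
  linarith

lemma SHL.eta_pos (hp : 1 < p) : 0 < SHL.eta p := by
  have := SHL.two_rpow_neg_lt hp; unfold SHL.eta; linarith

lemma SHL.eta_lt (hp : 1 < p) : (2:ℝ) ^ (-p) < 1/2 - SHL.eta p := by
  have := SHL.two_rpow_neg_lt hp; unfold SHL.eta; linarith

lemma SHL.sVal_pos (hp : 1 < p) : 0 < SHL.sVal p := by
  have h := SHL.eta_lt hp
  have h2 : (0:ℝ) < 2 ^ (-p) := Real.rpow_pos_of_pos two_pos _
  exact Real.rpow_pos_of_pos (by linarith) _

lemma SHL.tVal_pos (hp : 1 < p) : 0 < SHL.tVal p := by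
  have := SHL.eta_pos hp
  exact Real.rpow_pos_of_pos (by linarith) _

lemma SHL.sVal_rpow (hp : 1 < p) : SHL.sVal p ^ p = 1/2 - SHL.eta p := by
  have h := SHL.eta_lt hp
  have h2 : (0:ℝ) < 2 ^ (-p) := Real.rpow_pos_of_pos two_pos _
  exact SHL.rpow_inv_rpow (by linarith) (by linarith)

lemma SHL.tVal_rpow (hp : 1 < p) : SHL.tVal p ^ p = 1/2 + SHL.eta p := by
  have := SHL.eta_pos hp
  exact SHL.rpow_inv_rpow (by linarith) (by linarith)

lemma SHL.half_lt_sVal (hp : 1 < p) : 1/2 < SHL.sVal p := by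
  have h2 : (0:ℝ) < 2 ^ (-p) := Real.rpow_pos_of_pos two_pos _
  have hp0 : (0:ℝ) < 1/p := by positivity
  have key : ((2:ℝ) ^ (-p)) ^ (1/p) < SHL.sVal p :=
    Real.rpow_lt_rpow h2.le (SHL.eta_lt hp) hp0
  have he : ((2:ℝ) ^ (-p)) ^ (1/p) = 1/2 := by
    rw [← Real.rpow_mul (by norm_num)]
    rw [show -p * (1/p) = -1 by field_simp]
    rw [show ((-1:ℝ)) = ((-1 : ℤ) : ℝ) by norm_num, Real.rpow_intCast, zpow_neg_one]
    norm_num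
  linarith [he ▸ key]

lemma SHL.one_lt_tfac (hp : 1 < p) : 1 < 2 ^ (1/p) * SHL.tVal p := by
  have he := SHL.eta_pos hp
  have h : (2:ℝ) ^ (1/p) * SHL.tVal p = (1 + 2 * SHL.eta p) ^ (1/p) := by
    unfold SHL.tVal
    rw [← Real.mul_rpow (by norm_num) (by linarith)]
    ring_nf
  rw [h]
  rw [Real.one_lt_rpow_iff_of_pos (by linarith)]
  exact Or.inl ⟨by linarith, by positivity⟩

/-- the index type of the point family -/
abbrev SHL.Idx (n : ℕ) [NeZero n] := Bool × Bool × {i : Fin n // i ≠ 0}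

/-- the point family: `±s·e₀ ± t·e_i` -/
def SHL.ptFun (n : ℕ) [NeZero n] (p : ℝ) (a : SHL.Idx n) :
    PiLp (ENNReal.ofReal p) (fun _ : Fin n => ℝ) :=
  (WithLp.equiv _ _).symm (fun k =>
    if k = 0 then SHL.bsgn a.1 * SHL.sVal p else
    if k = a.2.2.1 then SHL.bsgn a.2.1 * SHL.tVal p else 0)

lemma SHL.ptFun_apply (a : SHL.Idx n) (k : Fin n) :
    SHL.ptFun n p a k =
      (if k = 0 then SHL.bsgn a.1 * SHL.sVal p else
       if k = a.2.2.1 then SHL.bsgn a.2.1 * SHL.tVal p else 0) := rfl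

lemma SHL.ptFun_zero (a : SHL.Idx n) : SHL.ptFun n p a 0 = SHL.bsgn a.1 * SHL.sVal p := by
  rw [SHL.ptFun_apply]; simp

lemma SHL.ptFun_ne_zero (a : SHL.Idx n) {k : Fin n} (hk : k ≠ 0) :
    SHL.ptFun n p a k = (if k = a.2.2.1 then SHL.bsgn a.2.1 * SHL.tVal p else 0) := by
  rw [SHL.ptFun_apply, if_neg hk]

lemma SHL.ptFun_abs_ne_zero (hp : 1 < p) (a : SHL.Idx n) {k : Fin n} (hk : k ≠ 0) :
    |SHL.ptFun n p a k| ≤ SHL.tVal p := by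
  rw [SHL.ptFun_ne_zero a hk]
  split
  · rw [abs_mul, SHL.bsgn_abs, one_mul, abs_of_pos (SHL.tVal_pos hp)]
  · simp [(SHL.tVal_pos hp).le]

lemma SHL.ptFun_norm (hp : 1 < p) [Fact (1 ≤ ENNReal.ofReal p)] (a : SHL.Idx n) :
    ‖SHL.ptFun n p a‖ = 1 := by
  have hp0 : 0 < p := by linarith
  have hs := SHL.sVal_pos hp
  have ht := SHL.tVal_pos hp
  rw [SHL.norm_rpow_eq hp]
  have hsum : ∑ k, |SHL.ptFun n p a k| ^ p = SHL.sVal p ^ p + SHL.tVal p ^ p := by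
    have hvan : ∀ k ∈ Finset.univ, k ∉ ({0, a.2.2.1} : Finset (Fin n)) →
        |SHL.ptFun n p a k| ^ p = 0 := by
      intro k _ hk
      simp only [Finset.mem_insert, Finset.mem_singleton, not_or] at hk
      rw [SHL.ptFun_ne_zero a hk.1, if_neg hk.2, abs_zero, Real.zero_rpow hp0.ne']
    rw [← Finset.sum_subset (Finset.subset_univ ({0, a.2.2.1} : Finset (Fin n))) hvan]
    rw [Finset.sum_pair (Ne.symm a.2.2.2)]
    rw [SHL.ptFun_zero, SHL.ptFun_ne_zero a a.2.2.2, if_pos rfl]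
    rw [abs_mul, abs_mul, SHL.bsgn_abs, SHL.bsgn_abs, one_mul, one_mul,
      abs_of_pos hs, abs_of_pos ht]
  rw [hsum, SHL.sVal_rpow hp, SHL.tVal_rpow hp]
  norm_num

lemma SHL.ptFun_injective (hp : 1 < p) : Function.Injective (SHL.ptFun n p) := by
  intro a b h
  have hs := SHL.sVal_pos hp
  have ht := SHL.tVal_pos hp
  have hk : ∀ k : Fin n, SHL.ptFun n p a k = SHL.ptFun n p b k := fun k => by rw [h]
  have h0 := hk 0
  rw [SHL.ptFun_zero, SHL.ptFun_zero] at h0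
  have h1 : a.1 = b.1 := SHL.bsgn_inj (mul_right_cancel₀ hs.ne' h0)
  have h2 := hk a.2.2.1
  rw [SHL.ptFun_ne_zero a a.2.2.2, SHL.ptFun_ne_zero b a.2.2.2, if_pos rfl] at h2
  by_cases hij : a.2.2.1 = b.2.2.1
  · rw [if_pos hij] at h2
    have h3 : a.2.1 = b.2.1 := SHL.bsgn_inj (mul_right_cancel₀ ht.ne' h2)
    obtain ⟨a1, a2, a3⟩ := a; obtain ⟨b1, b2, b3⟩ := b
    simp only at h1 h3 hij ⊢
    exact Prod.ext h1 (Prod.ext h3 (Subtype.ext hij))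
  · rw [if_neg hij] at h2
    exfalso
    rcases mul_eq_zero.1 h2 with h | h
    · have hb := SHL.bsgn_abs a.2.1
      rw [h, abs_zero] at hb; norm_num at hb
    · exact ht.ne' h

lemma SHL.pairs (hp : 1 < p) [Fact (1 ≤ ENNReal.ofReal p)] {a b : SHL.Idx n} (hab : a ≠ b) :
    ∃ f : PiLp (ENNReal.ofReal p) (fun _ : Fin n => ℝ) →L[ℝ] ℝ, ‖f‖ ≤ 1 ∧
      min (2 * SHL.sVal p) (2 ^ (1/p) * SHL.tVal p) ≤
        f (SHL.ptFun n p a) - f (SHL.ptFun n p b) ∧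
      ∀ c : SHL.Idx n, f (SHL.ptFun n p b) ≤ f (SHL.ptFun n p c) ∧
        f (SHL.ptFun n p c) ≤ f (SHL.ptFun n p a) := by
  have hs := SHL.sVal_pos hp
  have ht := SHL.tVal_pos hp
  have mkf : ∀ (c₁ : ℝ) (i : Fin n) (c₂ : ℝ) (j : Fin n),
      (∀ x : PiLp (ENNReal.ofReal p) (fun _ : Fin n => ℝ), |c₁ * x i + c₂ * x j| ≤ ‖x‖) →
      ∃ f : PiLp (ENNReal.ofReal p) (fun _ : Fin n => ℝ) →L[ℝ] ℝ, ‖f‖ ≤ 1 ∧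
        ∀ x, f x = c₁ * x i + c₂ * x j := by
    intro c₁ i c₂ j hbd
    refine ⟨LinearMap.mkContinuous
      { toFun := fun x => c₁ * x i + c₂ * x j
        map_add' := fun x y => by simp [PiLp.add_apply]; ring
        map_smul' := fun c x => by simp [PiLp.smul_apply]; ring } 1
      (fun x => by simpa using hbd x), ?_, fun x => rfl⟩
    exact LinearMap.mkContinuous_norm_le _ zero_le_one _
  by_cases hσ : a.1 = b.1
  · by_cases hii : a.2.2 = b.2.2
    · -- same sign on e₀, same coordinate index, so different sign on e_i
      have hε : a.2.1 ≠ b.2.1 := by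
        intro h
        exact hab (Prod.ext hσ (Prod.ext h hii))
      obtain ⟨f, hf1, hfeq⟩ := mkf (SHL.bsgn a.2.1) a.2.2.1 0 a.2.2.1
        (fun x => by
          rw [zero_mul, add_zero, abs_mul, SHL.bsgn_abs, one_mul]
          exact SHL.coord_abs_le hp _ x)
      have hval : ∀ c : SHL.Idx n,
          f (SHL.ptFun n p c) = SHL.bsgn a.2.1 * SHL.ptFun n p c a.2.2.1 := by
        intro c; rw [hfeq]; ring
      have hfa : f (SHL.ptFun n p a) = SHL.tVal p := by
        rw [hval, SHL.ptFun_ne_zero a a.2.2.2, if_pos rfl, ← mul_assoc,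
          SHL.bsgn_mul_self, one_mul]
      have hfb : f (SHL.ptFun n p b) = -SHL.tVal p := by
        have hval' : a.2.2.1 = b.2.2.1 := by rw [hii]
        rw [hval, SHL.ptFun_ne_zero b a.2.2.2, if_pos hval', ← mul_assoc,
          SHL.bsgn_mul_ne hε, neg_one_mul]
      have hbnd : ∀ c : SHL.Idx n, |f (SHL.ptFun n p c)| ≤ SHL.tVal p := by
        intro c
        rw [hval, abs_mul, SHL.bsgn_abs, one_mul]
        exact SHL.ptFun_abs_ne_zero hp c a.2.2.2
      refine ⟨f, hf1, ?_, fun c => ?_⟩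
      · rw [hfa, hfb]
        have h2 : (2:ℝ) ^ (1/p) ≤ 2 := by
          calc (2:ℝ) ^ (1/p) ≤ 2 ^ (1:ℝ) :=
              Real.rpow_le_rpow_of_exponent_le one_le_two
                (by rw [div_le_one (by linarith)]; linarith)
            _ = 2 := Real.rpow_one 2
        have := mul_le_mul_of_nonneg_right h2 ht.le
        have := min_le_right (2 * SHL.sVal p) (2 ^ (1/p) * SHL.tVal p)
        linarith
      · have h := abs_le.1 (hbnd c)
        rw [hfa, hfb]
        exact ⟨h.1, h.2⟩
    · -- different coordinate indices
      have hij : a.2.2.1 ≠ b.2.2.1 := fun h => hii (Subtype.ext h)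
      have hc0 : (0:ℝ) < 2 ^ (1/p - 1) := Real.rpow_pos_of_pos two_pos _
      obtain ⟨f, hf1, hfeq⟩ := mkf (2 ^ (1/p - 1) * SHL.bsgn a.2.1) a.2.2.1
        (-(2 ^ (1/p - 1) * SHL.bsgn b.2.1)) b.2.2.1
        (fun x => by
          have h1 := SHL.two_coord_le hp hij x
          calc |2 ^ (1/p-1) * SHL.bsgn a.2.1 * x a.2.2.1 +
                -(2 ^ (1/p-1) * SHL.bsgn b.2.1) * x b.2.2.1|
              ≤ |2 ^ (1/p-1) * SHL.bsgn a.2.1 * x a.2.2.1| +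
                |-(2 ^ (1/p-1) * SHL.bsgn b.2.1) * x b.2.2.1| := abs_add_le _ _
            _ = 2 ^ (1/p-1) * (|x a.2.2.1| + |x b.2.2.1|) := by
                rw [abs_mul, abs_mul, abs_mul, abs_neg, abs_mul, SHL.bsgn_abs,
                  SHL.bsgn_abs, abs_of_pos hc0]
                ring
            _ ≤ ‖x‖ := h1)
      have hfa : f (SHL.ptFun n p a) = 2 ^ (1/p - 1) * SHL.tVal p := by
        rw [hfeq, SHL.ptFun_ne_zero a a.2.2.2, if_pos rfl,
          SHL.ptFun_ne_zero a b.2.2.2, if_neg (fun h => hij h.symm), mul_zero, add_zero,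
          mul_assoc, ← mul_assoc (SHL.bsgn a.2.1), SHL.bsgn_mul_self, one_mul]
      have hfb : f (SHL.ptFun n p b) = -(2 ^ (1/p - 1) * SHL.tVal p) := by
        rw [hfeq, SHL.ptFun_ne_zero b a.2.2.2, if_neg hij,
          SHL.ptFun_ne_zero b b.2.2.2, if_pos rfl, mul_zero, zero_add, neg_mul,
          mul_assoc, ← mul_assoc (SHL.bsgn b.2.1), SHL.bsgn_mul_self, one_mul]
      have hbnd : ∀ c : SHL.Idx n, |f (SHL.ptFun n p c)| ≤ 2 ^ (1/p - 1) * SHL.tVal p := by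
        intro c
        rw [hfeq]
        by_cases hc : a.2.2.1 = c.2.2.1
        · have hv : SHL.ptFun n p c b.2.2.1 = 0 := by
            rw [SHL.ptFun_ne_zero c b.2.2.2, if_neg (fun h => hij (hc.trans h.symm))]
          rw [hv, mul_zero, add_zero, abs_mul, abs_mul, SHL.bsgn_abs, mul_one,
            abs_of_pos hc0]
          exact mul_le_mul_of_nonneg_left (SHL.ptFun_abs_ne_zero hp c a.2.2.2) hc0.le
        · have hu : SHL.ptFun n p c a.2.2.1 = 0 := by
            rw [SHL.ptFun_ne_zero c a.2.2.2, if_neg hc]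
          rw [hu, mul_zero, zero_add, abs_mul, abs_neg, abs_mul, SHL.bsgn_abs, mul_one,
            abs_of_pos hc0]
          exact mul_le_mul_of_nonneg_left (SHL.ptFun_abs_ne_zero hp c b.2.2.2) hc0.le
      refine ⟨f, hf1, ?_, fun c => ?_⟩
      · rw [hfa, hfb]
        have h2 : (2:ℝ) ^ (1:ℝ) * 2 ^ (1/p - 1) = 2 ^ (1/p) := by
          rw [← Real.rpow_add two_pos]; norm_num
        rw [Real.rpow_one] at h2
        have := min_le_right (2 * SHL.sVal p) (2 ^ (1/p) * SHL.tVal p)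
        nlinarith
      · have h := abs_le.1 (hbnd c)
        rw [hfa, hfb]
        exact ⟨h.1, h.2⟩
  · -- different signs on e₀
    obtain ⟨f, hf1, hfeq⟩ := mkf (SHL.bsgn a.1) 0 0 0
      (fun x => by
        rw [zero_mul, add_zero, abs_mul, SHL.bsgn_abs, one_mul]
        exact SHL.coord_abs_le hp _ x)
    have hval : ∀ c : SHL.Idx n,
        f (SHL.ptFun n p c) = SHL.bsgn a.1 * SHL.bsgn c.1 * SHL.sVal p := by
      intro c; rw [hfeq, SHL.ptFun_zero]; ring
    have hfa : f (SHL.ptFun n p a) = SHL.sVal p := by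
      rw [hval, SHL.bsgn_mul_self, one_mul]
    have hfb : f (SHL.ptFun n p b) = -SHL.sVal p := by
      rw [hval, SHL.bsgn_mul_ne hσ, neg_one_mul]
    have hbnd : ∀ c : SHL.Idx n, |f (SHL.ptFun n p c)| ≤ SHL.sVal p := by
      intro c
      rw [hval, abs_mul, abs_mul, SHL.bsgn_abs, SHL.bsgn_abs, one_mul, one_mul,
        abs_of_pos hs]
    refine ⟨f, hf1, ?_, fun c => ?_⟩
    · rw [hfa, hfb]
      have := min_le_left (2 * SHL.sVal p) (2 ^ (1/p) * SHL.tVal p)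
      linarith
    · have h := abs_le.1 (hbnd c)
      rw [hfa, hfb]
      exact ⟨h.1, h.2⟩

/-- For every `n ≥ 3` and `1 < p < ∞`, `H'_α(ℓ_p^n) ≥ 4n − 4`: there
exist `4n − 4` points on the unit sphere of `ℓ_p^n` forming a bounded and separated
antipodal set with some constant `d > 1`. -/
theorem strictHalpha_lp_ge (n : ℕ) (hn : 3 ≤ n) (p : ℝ) (hp : 1 < p)
    [Fact (1 ≤ ENNReal.ofReal p)] :
    (∃ S : Finset (PiLp (ENNReal.ofReal p) (fun _ : Fin n => ℝ)),
      S.card = 4 * n - 4 ∧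
      (S : Set (PiLp (ENNReal.ofReal p) (fun _ : Fin n => ℝ))) ⊆ sphere 0 1 ∧
      ∃ d : ℝ, 1 < d ∧
        IsBSA (S : Set (PiLp (ENNReal.ofReal p) (fun _ : Fin n => ℝ))) d) ∧
    4 * n - 4 ≤ strictHalpha (PiLp (ENNReal.ofReal p) (fun _ : Fin n => ℝ)) := by
  classical
  have hnz : NeZero n := ⟨by omega⟩
  have hs := SHL.sVal_pos hp
  have ht := SHL.tVal_pos hp
  set X := PiLp (ENNReal.ofReal p) (fun _ : Fin n => ℝ) with hX
  set S : Finset X := Finset.image (SHL.ptFun n p) Finset.univ with hS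
  have hcard : S.card = 4 * n - 4 := by
    rw [hS, Finset.card_image_of_injective _ (SHL.ptFun_injective hp), Finset.card_univ]
    have h1 : Fintype.card {i : Fin n // i ≠ 0} = n - 1 := by
      rw [Fintype.card_subtype_compl, Fintype.card_subtype_eq, Fintype.card_fin]
    rw [show Fintype.card (SHL.Idx n) = 2 * (2 * (n-1)) by
      simp [SHL.Idx, Fintype.card_prod, Fintype.card_bool, h1]]
    omega
  have hsub : (S : Set X) ⊆ sphere 0 1 := by
    intro x hx
    simp only [hS, Finset.coe_image, Set.mem_image, Finset.mem_coe, Finset.mem_univ] at hx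
    obtain ⟨a, -, rfl⟩ := hx
    exact mem_sphere_zero_iff_norm.2 (SHL.ptFun_norm hp a)
  have hmem : ∀ x ∈ (S : Set X), ∃ a : SHL.Idx n, SHL.ptFun n p a = x := by
    intro x hx
    simp only [hS, Finset.coe_image, Set.mem_image, Finset.mem_coe, Finset.mem_univ] at hx
    obtain ⟨a, -, rfl⟩ := hx
    exact ⟨a, rfl⟩
  set d : ℝ := min (2 * SHL.sVal p) (2 ^ (1/p) * SHL.tVal p) with hd
  have hd1 : 1 < d := lt_min (by have := SHL.half_lt_sVal hp; linarith) (SHL.one_lt_tfac hp)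
  have hpair : ∀ x ∈ (S : Set X), ∀ y ∈ (S : Set X), x ≠ y →
      ∃ f : X →L[ℝ] ℝ, ‖f‖ ≤ 1 ∧ d ≤ f x - f y ∧ ∀ z ∈ (S : Set X), f y ≤ f z ∧ f z ≤ f x := by
    intro x hx y hy hxy
    obtain ⟨a, rfl⟩ := hmem x hx
    obtain ⟨b, rfl⟩ := hmem y hy
    have hab : a ≠ b := fun h => hxy (by rw [h])
    obtain ⟨f, hf1, hf2, hf3⟩ := SHL.pairs hp hab
    refine ⟨f, hf1, hf2, fun z hz => ?_⟩
    obtain ⟨c, rfl⟩ := hmem z hz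
    exact hf3 c
  have hBSA : IsBSA (S : Set X) d := by
    refine ⟨fun x hx => ?_, hpair⟩
    have := hsub hx
    rw [mem_sphere_zero_iff_norm] at this
    rw [mem_closedBall_zero_iff, this]
  have hSAP : StrictAntipProp (S : Set X) := by
    intro x hx y hy hxy
    obtain ⟨f, hf1, hf2, hf3⟩ := hpair x hx y hy hxy
    exact ⟨f, hf1, lt_of_lt_of_le hd1 hf2, hf3⟩
  refine ⟨⟨S, hcard, hsub, d, hd1, hBSA⟩, ?_⟩
  -- the sSup part
  have hKmem : (4 * n - 4) ∈ {k : ℕ | ∃ S : Finset X, S.card = k ∧ (S : Set X) ⊆ sphere (0 : X) 1 ∧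
      StrictAntipProp (S : Set X)} := ⟨S, hcard, hsub, hSAP⟩
  refine le_csSup ?_ hKmem
  -- bounded above
  have hcomp : IsCompact (sphere (0 : X) 1) := isCompact_sphere 0 1
  obtain ⟨t, htfin, hcov⟩ := Metric.totallyBounded_iff.1 hcomp.totallyBounded (1/2) (by norm_num)
  set g : X → X := fun x =>
    if h : ∃ y ∈ t, x ∈ ball y (1/2) then h.choose else 0 with hg
  refine ⟨htfin.toFinset.card, fun k hk => ?_⟩
  obtain ⟨T, hT, hTsub, hTsap⟩ := hk
  have hgspec : ∀ x ∈ (T : Set X), g x ∈ t ∧ x ∈ ball (g x) (1/2) := by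
    intro x hx
    have hx' : x ∈ ⋃ y ∈ t, ball y (1/2) := hcov (hTsub hx)
    rw [Set.mem_iUnion₂] at hx'
    obtain ⟨y, hy1, hy2⟩ := hx'
    have hex : ∃ y ∈ t, x ∈ ball y (1/2) := ⟨y, hy1, hy2⟩
    rw [hg]
    simp only [dif_pos hex]
    exact ⟨hex.choose_spec.1, hex.choose_spec.2⟩
  rw [← hT]
  refine Finset.card_le_card_of_injOn g (fun x hx => ?_) (fun x hx y hy hgxy => ?_)
  · rw [Finset.mem_coe, Set.Finite.mem_toFinset]
    exact (hgspec x hx).1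
  · by_contra hne
    obtain ⟨f, hf1, hf2, -⟩ := hTsap x hx y hy hne
    have hdist : dist x y < 1 := by
      have h1 := mem_ball.1 (hgspec x hx).2
      have h2 := mem_ball.1 (hgspec y hy).2
      calc dist x y ≤ dist x (g x) + dist (g y) y := by
            rw [hgxy]; exact dist_triangle x (g y) y
        _ < 1 := by rw [dist_comm (g y) y]; linarith
    have hle : f x - f y ≤ dist x y := by
      calc f x - f y = f (x - y) := (map_sub f x y).symm
        _ ≤ |f (x - y)| := le_abs_self _
        _ = ‖f (x - y)‖ := rfl
        _ ≤ ‖f‖ * ‖x - y‖ := f.le_opNorm _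
        _ ≤ 1 * ‖x - y‖ := mul_le_mul_of_nonneg_right hf1 (norm_nonneg _)
        _ = dist x y := by rw [one_mul, dist_eq_norm]
    linarith

end
end

section
/- For every δ ∈ (0, 1/3] there exist ε > 0 and n₀ ∈ ℕ such that for all n ≥ n₀ there is a set S of more than (1+ε)^n points on the unit sphere of ℓ_2^n that is a bounded and separated antipodal set with some constant d > √(2 − 2δ) ≥ √(4/3) > 1. Consequently H'_α(ℓ_2^n) grows exponentially in n. -/
open Metric

noncomputable section

namespace BSAAux

open Finset
open scoped RealInnerProductSpace

def sgn (b : Bool) : ℝ := if b then 1 else -1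

def corr (n : ℕ) (v w : Fin n → Bool) : ℝ := ∑ i, sgn (v i) * sgn (w i)

lemma sgn_sq (b : Bool) : sgn b ^ 2 = 1 := by cases b <;> norm_num [sgn]

lemma sgn_mul_self (b : Bool) : sgn b * sgn b = 1 := by cases b <;> norm_num [sgn]

lemma sgn_inj : Function.Injective sgn := by
  intro a b h
  cases a <;> cases b <;> first | rfl | (exfalso; norm_num [sgn] at h)

lemma corr_self (n : ℕ) (v : Fin n → Bool) : corr n v v = n := by
  simp [corr, sgn_mul_self]

lemma corr_comm (n : ℕ) (v w : Fin n → Bool) : corr n v w = corr n w v := by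
  simp [corr, mul_comm]

lemma sum_exp_corr (n : ℕ) (t : ℝ) (w : Fin n → Bool) :
    ∑ v : Fin n → Bool, Real.exp (t * corr n v w)
      = (Real.exp t + Real.exp (-t)) ^ n := by
  have h1 : ∀ v : Fin n → Bool, Real.exp (t * corr n v w)
      = ∏ i, Real.exp (t * (sgn (v i) * sgn (w i))) := by
    intro v
    rw [corr, Finset.mul_sum, Real.exp_sum]
  simp_rw [h1]
  have h2 : ∑ v : Fin n → Bool, ∏ i, Real.exp (t * (sgn (v i) * sgn (w i)))
      = ∏ i : Fin n, ∑ b : Bool, Real.exp (t * (sgn b * sgn (w i))) := by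
    rw [Finset.prod_univ_sum]
    rw [Fintype.piFinset_univ]
  rw [h2]
  have h3 : ∀ i : Fin n, ∑ b : Bool, Real.exp (t * (sgn b * sgn (w i)))
      = Real.exp t + Real.exp (-t) := by
    intro i
    cases hwi : w i <;> simp [sgn, Fintype.sum_bool] <;> ring_nf <;>
      simp [add_comm]
  rw [Finset.prod_congr rfl fun i _ => h3 i, Finset.prod_const, Finset.card_univ,
    Fintype.card_fin]

lemma mgf_le (n : ℕ) (t : ℝ) (w : Fin n → Bool) :
    ∑ v : Fin n → Bool, Real.exp (t * corr n v w)
      ≤ 2 ^ n * Real.exp (t ^ 2 * n / 2) := by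
  rw [sum_exp_corr]
  have h : Real.exp t + Real.exp (-t) ≤ 2 * Real.exp (t ^ 2 / 2) := by
    have := Real.cosh_le_exp_half_sq t
    rw [Real.cosh_eq] at this
    linarith
  calc (Real.exp t + Real.exp (-t)) ^ n ≤ (2 * Real.exp (t ^ 2 / 2)) ^ n := by
        apply pow_le_pow_left₀ (by positivity) h
    _ = 2 ^ n * Real.exp (t ^ 2 * n / 2) := by
        rw [mul_pow, ← Real.exp_nat_mul]
        ring_nf

lemma one_side (n : ℕ) (θ t : ℝ) (w : Fin n → Bool)
    (P : (Fin n → Bool) → Prop) [DecidablePred P]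
    (hP : ∀ v, P v → θ ^ 2 * n ≤ t * corr n v w) :
    ((univ.filter P).card : ℝ) ≤ 2 ^ n * Real.exp (t ^ 2 * n / 2 - θ ^ 2 * n) := by
  have key : ((univ.filter P).card : ℝ) * Real.exp (θ ^ 2 * n)
      ≤ ∑ v : Fin n → Bool, Real.exp (t * corr n v w) := by
    calc ((univ.filter P).card : ℝ) * Real.exp (θ ^ 2 * n)
        = ∑ _v ∈ univ.filter P, Real.exp (θ ^ 2 * n) := by
          rw [Finset.sum_const, nsmul_eq_mul]
      _ ≤ ∑ v ∈ univ.filter P, Real.exp (t * corr n v w) := by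
          apply Finset.sum_le_sum
          intro v hv
          exact Real.exp_le_exp.2 (hP v (Finset.mem_filter.1 hv).2)
      _ ≤ ∑ v : Fin n → Bool, Real.exp (t * corr n v w) := by
          apply Finset.sum_le_sum_of_subset_of_nonneg (Finset.filter_subset _ _)
          intro v _ _; positivity
  have h2 := le_trans key (mgf_le n t w)
  have h3 : (0:ℝ) < Real.exp (θ ^ 2 * n) := Real.exp_pos _
  rw [← le_div_iff₀ h3] at h2
  calc ((univ.filter P).card : ℝ)
      ≤ 2 ^ n * Real.exp (t ^ 2 * n / 2) / Real.exp (θ ^ 2 * n) := h2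
    _ = 2 ^ n * Real.exp (t ^ 2 * n / 2 - θ ^ 2 * n) := by
        rw [Real.exp_sub]; ring

lemma bad_count (n : ℕ) (θ : ℝ) (hθ : 0 < θ) (x : Fin n → Bool) :
    ((univ.filter fun y => θ * n < |corr n x y|).card : ℝ)
      ≤ 2 * (2 ^ n * Real.exp (-(θ ^ 2 * n / 2))) := by
  classical
  set P1 : (Fin n → Bool) → Prop := fun y => θ * n < corr n y x with hP1
  set P2 : (Fin n → Bool) → Prop := fun y => θ * n < -corr n y x with hP2
  have hsub : (univ.filter fun y => θ * n < |corr n x y|)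
      ⊆ (univ.filter P1) ∪ (univ.filter P2) := by
    intro y hy
    rw [Finset.mem_filter, corr_comm] at hy
    rcases lt_abs.mp hy.2 with h | h
    · exact Finset.mem_union_left _ (Finset.mem_filter.2 ⟨Finset.mem_univ _, h⟩)
    · exact Finset.mem_union_right _ (Finset.mem_filter.2 ⟨Finset.mem_univ _, h⟩)
  have h1 : ((univ.filter P1).card : ℝ) ≤ 2 ^ n * Real.exp (-(θ ^ 2 * n / 2)) := by
    have hb := one_side n θ θ x P1 (fun v hv => by
      have h : θ * (n:ℝ) < corr n v x := hv
      nlinarith)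
    rw [show θ ^ 2 * (n:ℝ) / 2 - θ ^ 2 * n = -(θ ^ 2 * n / 2) by ring] at hb
    exact hb
  have h2 : ((univ.filter P2).card : ℝ) ≤ 2 ^ n * Real.exp (-(θ ^ 2 * n / 2)) := by
    have hb := one_side n θ (-θ) x P2 (fun v hv => by
      have h : θ * (n:ℝ) < -corr n v x := hv
      nlinarith)
    rw [show (-θ) ^ 2 * (n:ℝ) / 2 - θ ^ 2 * n = -(θ ^ 2 * n / 2) by ring] at hb
    exact hb
  have hc : ((univ.filter fun y => θ * n < |corr n x y|).card : ℝ)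
      ≤ ((univ.filter P1).card : ℝ) + ((univ.filter P2).card : ℝ) := by
    exact_mod_cast le_trans (Finset.card_le_card hsub)
      (Finset.card_union_le (univ.filter P1) (univ.filter P2))
  linarith

lemma greedy {Ω : Type*} [DecidableEq Ω] (R : Ω → Ω → Prop) [DecidableRel R]
    (hsymm : ∀ x y, R x y → R y x) (hrefl : ∀ x, R x x) (B : ℕ) :
    ∀ (k : ℕ) (A : Finset Ω), A.card ≤ k → (∀ x ∈ A, (A.filter (R x)).card ≤ B) →
    ∃ T : Finset Ω, T ⊆ A ∧ A.card ≤ B * T.card ∧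
      ∀ x ∈ T, ∀ y ∈ T, x ≠ y → ¬ R x y := by
  intro k
  induction k with
  | zero =>
    intro A hA _
    refine ⟨∅, Finset.empty_subset _, by simpa using hA, by simp⟩
  | succ k ih =>
    intro A hA hbound
    rcases A.eq_empty_or_nonempty with rfl | ⟨x, hx⟩
    · exact ⟨∅, Finset.empty_subset _, by simp, by simp⟩
    · set A' := A \ A.filter (R x) with hA'def
      have hxA' : x ∉ A' := by
        simp [hA'def, Finset.mem_sdiff, hx, hrefl x]
      have hsub : A' ⊆ A := Finset.sdiff_subset
      have hcard : A'.card ≤ k := by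
        have : A'.card < A.card := Finset.card_lt_card ⟨hsub, fun h => hxA' (h hx)⟩
        omega
      have hbound' : ∀ y ∈ A', (A'.filter (R y)).card ≤ B := by
        intro y hy
        exact le_trans (Finset.card_le_card (Finset.filter_subset_filter _ hsub))
          (hbound y (hsub hy))
      obtain ⟨T', hT'sub, hT'card, hT'good⟩ := ih A' hcard hbound'
      refine ⟨insert x T', ?_, ?_, ?_⟩
      · exact Finset.insert_subset hx (hT'sub.trans hsub)
      · have hxT' : x ∉ T' := fun h => hxA' (hT'sub h)
        rw [Finset.card_insert_of_notMem hxT']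
        have h1 : A.card ≤ A'.card + (A.filter (R x)).card := by
          have h2 : A ⊆ A' ∪ A.filter (R x) := by
            intro a ha
            by_cases h : a ∈ A.filter (R x)
            · exact Finset.mem_union_right _ h
            · exact Finset.mem_union_left _ (Finset.mem_sdiff.2 ⟨ha, h⟩)
          calc A.card ≤ (A' ∪ A.filter (R x)).card := Finset.card_le_card h2
            _ ≤ A'.card + (A.filter (R x)).card := Finset.card_union_le _ _
        calc A.card ≤ A'.card + (A.filter (R x)).card := h1
          _ ≤ B * T'.card + B := add_le_add hT'card (hbound x hx)
          _ = B * (T'.card + 1) := by ring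
      · intro a ha b hb hab
        rcases Finset.mem_insert.1 ha with rfl | ha' <;>
          rcases Finset.mem_insert.1 hb with rfl | hb'
        · exact absurd rfl hab
        · intro hR
          have hmem : b ∈ A' := hT'sub hb'
          rw [hA'def, Finset.mem_sdiff] at hmem
          exact hmem.2 (Finset.mem_filter.2 ⟨hmem.1, hR⟩)
        · intro hR
          have hmem : a ∈ A' := hT'sub ha'
          rw [hA'def, Finset.mem_sdiff] at hmem
          exact hmem.2 (Finset.mem_filter.2 ⟨hmem.1, hsymm _ _ hR⟩)
        · exact hT'good a ha' b hb' hab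

lemma exists_code (n : ℕ) (hn : 1 ≤ n) (θ : ℝ) (hθ0 : 0 < θ) (hθ1 : θ < 1) :
    ∃ T : Finset (Fin n → Bool),
      (∀ v ∈ T, ∀ w ∈ T, v ≠ w → |corr n v w| ≤ θ * n) ∧
      ((2:ℝ) ^ n ≤ (2 * (2 ^ n * Real.exp (-(θ ^ 2 * n / 2)))) * T.card) := by
  classical
  set R : (Fin n → Bool) → (Fin n → Bool) → Prop := fun v w => θ * n < |corr n v w|
    with hR
  have hsymm : ∀ v w, R v w → R w v := by
    intro v w h
    simpa [hR, corr_comm n w v] using h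
  have hrefl : ∀ v, R v v := by
    intro v
    have hn' : (1:ℝ) ≤ n := by exact_mod_cast hn
    simp only [hR, corr_self]
    rw [abs_of_nonneg (by linarith)]
    nlinarith
  set r : ℝ := 2 * (2 ^ n * Real.exp (-(θ ^ 2 * n / 2))) with hr
  have hr0 : 0 ≤ r := by positivity
  set B : ℕ := ⌊r⌋₊ with hB
  have hbound : ∀ x ∈ (univ : Finset (Fin n → Bool)), (univ.filter (R x)).card ≤ B := by
    intro x _
    rw [hB, Nat.le_floor_iff hr0]
    simpa [hR] using bad_count n θ hθ0 x
  obtain ⟨T, -, hTcard, hTgood⟩ := greedy R hsymm hrefl B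
    (Fintype.card (Fin n → Bool)) univ (le_of_eq Finset.card_univ) hbound
  refine ⟨T, ?_, ?_⟩
  · intro v hv w hw hvw
    have := hTgood v hv w hw hvw
    simp only [hR, not_lt] at this
    exact this
  · have hcarduniv : (univ : Finset (Fin n → Bool)).card = 2 ^ n := by
      simp [Finset.card_univ]
    have h1 : (2:ℝ) ^ n ≤ (B : ℝ) * T.card := by
      have := hTcard
      rw [hcarduniv] at this
      exact_mod_cast this
    have h2 : (B : ℝ) ≤ r := Nat.floor_le hr0
    calc (2:ℝ) ^ n ≤ (B : ℝ) * T.card := h1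
      _ ≤ r * T.card := by
          apply mul_le_mul_of_nonneg_right h2 (by positivity)

def emb (n : ℕ) (v : Fin n → Bool) : EuclideanSpace ℝ (Fin n) :=
  WithLp.toLp 2 (fun i => (Real.sqrt n)⁻¹ * sgn (v i))





lemma norm_emb {n : ℕ} (hn : 0 < n) (v : Fin n → Bool) : ‖emb n v‖ = 1 := by
  have hn' : (0:ℝ) < n := by exact_mod_cast hn
  rw [EuclideanSpace.norm_eq]
  have h1 : ∀ i : Fin n, ‖emb n v i‖ ^ 2 = (n:ℝ)⁻¹ := by
    intro i
    rw [Real.norm_eq_abs, sq_abs]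
    simp only [emb, PiLp.toLp_apply]
    rw [mul_pow, sgn_sq, mul_one, inv_pow, Real.sq_sqrt hn'.le]
  rw [Finset.sum_congr rfl (fun i _ => h1 i), Finset.sum_const, Finset.card_univ,
    Fintype.card_fin, nsmul_eq_mul, mul_inv_cancel₀ (ne_of_gt hn'), Real.sqrt_one]

lemma inner_emb {n : ℕ} (hn : 0 < n) (v w : Fin n → Bool) :
    ⟪emb n v, emb n w⟫ = corr n v w / n := by
  have hn' : (0:ℝ) < n := by exact_mod_cast hn
  rw [PiLp.inner_apply]
  simp only [RCLike.inner_apply, conj_trivial, emb, PiLp.toLp_apply, corr]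
  rw [Finset.sum_div]
  apply Finset.sum_congr rfl
  intro i _
  have hss : Real.sqrt n * Real.sqrt n = n := Real.mul_self_sqrt hn'.le
  have hs0 : Real.sqrt n ≠ 0 := by positivity
  rw [← hss]
  field_simp
  rw [Real.sqrt_sq (Real.sqrt_nonneg _)]
lemma emb_inj {n : ℕ} (hn : 0 < n) : Function.Injective (emb n) := by
  intro v w h
  funext i
  have := congrArg (fun x => x i) h
  simp only [emb, PiLp.toLp_apply] at this
  have hs : (Real.sqrt n)⁻¹ ≠ 0 := by
    have : (0:ℝ) < n := by exact_mod_cast hn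
    positivity
  exact sgn_inj (mul_left_cancel₀ hs this)

lemma geom {n : ℕ} (S : Set (EuclideanSpace ℝ (Fin n)))
    (hS : S ⊆ sphere 0 1) (θ : ℝ) (hθ0 : 0 ≤ θ) (hθ : θ ≤ 1 / 6)
    (hcorr : ∀ x ∈ S, ∀ y ∈ S, x ≠ y → |⟪x, y⟫| ≤ θ) :
    ∀ x ∈ S, ∀ y ∈ S, x ≠ y → ∃ f : EuclideanSpace ℝ (Fin n) →L[ℝ] ℝ, ‖f‖ ≤ 1 ∧
      Real.sqrt (2 - 2 * θ) ≤ f x - f y ∧ ∀ z ∈ S, f y ≤ f z ∧ f z ≤ f x := by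
  intro x hx y hy hxy
  have hnorm : ∀ z ∈ S, ‖z‖ = 1 := fun z hz => by
    simpa using mem_sphere_zero_iff_norm.1 (hS hz)
  have hxn : ‖x‖ = 1 := hnorm x hx
  have hyn : ‖y‖ = 1 := hnorm y hy
  have hsubsq : ‖x - y‖ ^ 2 = 2 - 2 * ⟪x, y⟫ := by
    rw [norm_sub_sq_real, hxn, hyn]; ring
  have hip : |⟪x, y⟫| ≤ θ := hcorr x hx y hy hxy
  have hlb : 2 - 2 * θ ≤ ‖x - y‖ ^ 2 := by
    have : ⟪x, y⟫ ≤ θ := le_trans (le_abs_self _) hip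
    rw [hsubsq]; linarith
  have hpos : 0 < ‖x - y‖ := by
    rw [norm_pos_iff]
    exact sub_ne_zero_of_ne hxy
  set u : EuclideanSpace ℝ (Fin n) := ‖x - y‖⁻¹ • (x - y) with hu
  have hun : ‖u‖ = 1 := by
    rw [hu, norm_smul, norm_inv, norm_norm, inv_mul_cancel₀ (ne_of_gt hpos)]
  refine ⟨innerSL ℝ u, ?_, ?_, ?_⟩
  · rw [innerSL_apply_norm, hun]
  · have h1 : (innerSL ℝ u) x - (innerSL ℝ u) y = ‖x - y‖ := by
      simp only [innerSL_apply_apply]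
      rw [← inner_sub_right, hu, real_inner_smul_left, real_inner_self_eq_norm_sq]
      field_simp
    rw [h1]
    calc Real.sqrt (2 - 2 * θ) ≤ Real.sqrt (‖x - y‖ ^ 2) := Real.sqrt_le_sqrt hlb
      _ = ‖x - y‖ := Real.sqrt_sq hpos.le
  · intro z hz
    simp only [innerSL_apply_apply, hu, real_inner_smul_left]
    have hinv : 0 ≤ ‖x - y‖⁻¹ := inv_nonneg.2 hpos.le
    have hAB : ⟪x - y, x⟫ - ⟪x - y, y⟫ = ‖x - y‖ ^ 2 := by
      rw [← inner_sub_right, real_inner_self_eq_norm_sq]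
    have key : ⟪x - y, y⟫ ≤ ⟪x - y, z⟫ ∧ ⟪x - y, z⟫ ≤ ⟪x - y, x⟫ := by
      by_cases hzx : z = x
      · rw [hzx]
        exact ⟨by nlinarith [sq_nonneg ‖x - y‖], le_refl _⟩
      by_cases hzy : z = y
      · rw [hzy]
        exact ⟨le_refl _, by nlinarith [sq_nonneg ‖x - y‖]⟩
      have hxz := abs_le.1 (hcorr x hx z hz (Ne.symm hzx))
      have hyz := abs_le.1 (hcorr y hy z hz (Ne.symm hzy))
      have hxy' := abs_le.1 hip
      have e1 : ⟪x - y, x⟫ = 1 - ⟪x, y⟫ := by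
        rw [inner_sub_left, real_inner_self_eq_norm_sq, hxn, real_inner_comm y x]
        ring
      have e2 : ⟪x - y, y⟫ = ⟪x, y⟫ - 1 := by
        rw [inner_sub_left, real_inner_self_eq_norm_sq, hyn]
        norm_num
      have e3 : ⟪x - y, z⟫ = ⟪x, z⟫ - ⟪y, z⟫ := by
        rw [inner_sub_left]
      rw [e1, e2, e3]
      constructor <;> linarith
    exact ⟨mul_le_mul_of_nonneg_left key.1 hinv, mul_le_mul_of_nonneg_left key.2 hinv⟩

end BSAAux

lemma strict_sep {X : Type*} [NormedAddCommGroup X] [NormedSpace ℝ X]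
    {S : Set X} (h : StrictAntipProp S) {x y : X} (hx : x ∈ S) (hy : y ∈ S)
    (hxy : x ≠ y) : 1 < dist x y := by
  obtain ⟨f, hf1, hf2, -⟩ := h x hx y hy hxy
  have : f x - f y = f (x - y) := by rw [map_sub]
  have hb : f (x - y) ≤ ‖x - y‖ := by
    calc f (x - y) ≤ ‖f (x - y)‖ := le_abs_self _
      _ ≤ ‖f‖ * ‖x - y‖ := f.le_opNorm _
      _ ≤ 1 * ‖x - y‖ := by
          exact mul_le_mul_of_nonneg_right hf1 (norm_nonneg _)
      _ = ‖x - y‖ := one_mul _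
  rw [dist_eq_norm]
  linarith [this ▸ hf2]

lemma bdd_strict (X : Type*) [NormedAddCommGroup X] [NormedSpace ℝ X] [ProperSpace X] :
    BddAbove {k : ℕ | ∃ S : Finset X, S.card = k ∧ (S : Set X) ⊆ sphere (0 : X) 1 ∧
      StrictAntipProp (S : Set X)} := by
  obtain ⟨t, htfin, htcov⟩ :=
    totallyBounded_iff.1 (isCompact_closedBall (0:X) 1).totallyBounded (1/2) (by norm_num)
  classical
  refine ⟨htfin.toFinset.card, ?_⟩
  rintro k ⟨S, rfl, hSsph, hSanti⟩
  have hcb : (S : Set X) ⊆ closedBall 0 1 := hSsph.trans sphere_subset_closedBall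
  set g : X → X := fun x => if h : ∃ c ∈ t, x ∈ ball c (1/2) then h.choose else x with hg
  apply Finset.card_le_card_of_injOn g
  · intro x hxS
    have hx : ∃ c ∈ t, x ∈ ball c (1/2) := by
      have := htcov (hcb hxS)
      simpa using this
    simp only [hg, dif_pos hx, Set.Finite.mem_toFinset]
    exact Finset.mem_coe.2 (htfin.mem_toFinset.2 hx.choose_spec.1)
  · intro x hxS y hyS hgxy
    by_contra hne
    have hx : ∃ c ∈ t, x ∈ ball c (1/2) := by simpa using htcov (hcb hxS)
    have hy : ∃ c ∈ t, y ∈ ball c (1/2) := by simpa using htcov (hcb hyS)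
    have hgx : g x = hx.choose := by simp only [hg, dif_pos hx]
    have hgy : g y = hy.choose := by simp only [hg, dif_pos hy]
    have hdx : dist x (hx.choose) < 1/2 := mem_ball.1 hx.choose_spec.2
    have hdy : dist y (hy.choose) < 1/2 := mem_ball.1 hy.choose_spec.2
    have hsep : 1 < dist x y := strict_sep hSanti (by simpa using hxS) (by simpa using hyS) hne
    have : dist x y ≤ dist x (hx.choose) + dist (hx.choose) y := dist_triangle _ _ _
    rw [hgx, hgy] at hgxy
    rw [hgxy] at this hdx
    rw [dist_comm] at hdy
    linarith [hdy]


/-- For every `δ ∈ (0, 1/3]` there exist `ε > 0` and `n₀` such that for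
all `n ≥ n₀` there is a set of more than `(1+ε)^n` points on the unit sphere of `ℓ_2^n`
which is a bounded and separated antipodal set with some constant
`d > √(2 − 2δ) ≥ √(4/3) > 1`. Consequently `H'_α(ℓ_2^n)` grows exponentially in `n`. -/
theorem strictHalpha_euclidean_exponential (δ : ℝ) (hδ0 : 0 < δ) (hδ : δ ≤ 1 / 3) :
    ∃ ε : ℝ, 0 < ε ∧ ∃ n₀ : ℕ, ∀ n : ℕ, n₀ ≤ n →
      ∃ S : Finset (EuclideanSpace ℝ (Fin n)),
        ((1 + ε : ℝ)) ^ n < (S.card : ℝ) ∧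
        (S : Set (EuclideanSpace ℝ (Fin n))) ⊆ sphere 0 1 ∧
        (∃ d : ℝ, Real.sqrt (2 - 2 * δ) < d ∧ 1 < d ∧
          IsBSA (S : Set (EuclideanSpace ℝ (Fin n))) d) ∧
        Real.sqrt (4 / 3) ≤ Real.sqrt (2 - 2 * δ) ∧
        ((1 + ε : ℝ)) ^ n < (strictHalpha (EuclideanSpace ℝ (Fin n)) : ℝ) := by
  classical
  set θ : ℝ := δ / 2 with hθdef
  have hθ0 : 0 < θ := by rw [hθdef]; linarith
  have hθ6 : θ ≤ 1 / 6 := by rw [hθdef]; linarith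
  have hθ1 : θ < 1 := by linarith
  refine ⟨Real.exp (θ ^ 2 / 4) - 1, ?_, ⌈(4:ℝ) / θ ^ 2⌉₊ + 1, ?_⟩
  · have h1 : 1 < Real.exp (θ ^ 2 / 4) := Real.one_lt_exp_iff.2 (by positivity)
    linarith
  intro n hn
  have hn1 : 1 ≤ n := le_trans (by omega) hn
  have hn' : (0:ℝ) < n := by exact_mod_cast hn1
  obtain ⟨T, hTgood, hTcount⟩ := BSAAux.exists_code n hn1 θ hθ0 hθ1
  set S : Finset (EuclideanSpace ℝ (Fin n)) := T.image (BSAAux.emb n) with hSdef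
  have hcardS : S.card = T.card :=
    Finset.card_image_of_injective T (BSAAux.emb_inj hn1)
  -- numerics
  set a : ℝ := Real.exp (θ ^ 2 * n / 4) with ha
  have ha0 : 0 < a := Real.exp_pos _
  have hpow : (1 + (Real.exp (θ ^ 2 / 4) - 1)) ^ n = a := by
    rw [add_sub_cancel, ← Real.exp_nat_mul, ha]
    congr 1
    ring
  have h2a : 2 < a := by
    have hceil : (4:ℝ) / θ ^ 2 ≤ (⌈(4:ℝ) / θ ^ 2⌉₊ : ℝ) := Nat.le_ceil _
    have hnge : ((⌈(4:ℝ) / θ ^ 2⌉₊ : ℕ) : ℝ) + 1 ≤ (n : ℝ) := by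
      exact_mod_cast hn
    have hgt : (4:ℝ) / θ ^ 2 < n := by linarith
    have hθ2 : (0:ℝ) < θ ^ 2 := by positivity
    have h4 : (4:ℝ) < θ ^ 2 * n := by
      rw [div_lt_iff₀ hθ2] at hgt
      linarith [hgt]
    have : (1:ℝ) < θ ^ 2 * n / 4 := by linarith
    have := Real.exp_lt_exp.2 this
    rw [← ha] at this
    linarith [Real.exp_one_gt_d9, this]
  have hE : Real.exp (-(θ ^ 2 * n / 2)) * a ^ 2 = 1 := by
    have h1 : a * a = Real.exp (θ ^ 2 * n / 2) := by
      rw [ha, ← Real.exp_add]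
      congr 1
      ring
    calc Real.exp (-(θ ^ 2 * n / 2)) * a ^ 2
        = Real.exp (-(θ ^ 2 * n / 2)) * (a * a) := by ring
      _ = Real.exp (-(θ ^ 2 * n / 2)) * Real.exp (θ ^ 2 * n / 2) := by rw [h1]
      _ = 1 := by rw [← Real.exp_add]; simp
  have h2n : (0:ℝ) < 2 ^ n := by positivity
  have hstep : (2:ℝ) ^ n * a ^ 2 ≤ (2:ℝ) ^ n * (2 * T.card) := by
    calc (2:ℝ) ^ n * a ^ 2
        ≤ (2 * (2 ^ n * Real.exp (-(θ ^ 2 * n / 2)))) * T.card * a ^ 2 :=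
          mul_le_mul_of_nonneg_right hTcount (sq_nonneg a)
      _ = (2:ℝ) ^ n * (2 * T.card) * (Real.exp (-(θ ^ 2 * n / 2)) * a ^ 2) := by ring
      _ = (2:ℝ) ^ n * (2 * T.card) := by rw [hE, mul_one]
  have ha2T : a ^ 2 ≤ 2 * T.card := le_of_mul_le_mul_left hstep h2n
  have haT : a < (T.card : ℝ) := by nlinarith [mul_pos ha0 (by linarith : (0:ℝ) < a - 2)]
  have hcount : ((1 + (Real.exp (θ ^ 2 / 4) - 1) : ℝ)) ^ n < (S.card : ℝ) := by
    rw [hpow, hcardS]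
    exact haT
  -- geometry
  have hSsph : (S : Set (EuclideanSpace ℝ (Fin n))) ⊆ sphere 0 1 := by
    intro x hx
    rw [Finset.mem_coe, hSdef, Finset.mem_image] at hx
    obtain ⟨v, -, rfl⟩ := hx
    rw [mem_sphere_zero_iff_norm]
    exact BSAAux.norm_emb hn1 v
  have hcorrS : ∀ x ∈ (S : Set (EuclideanSpace ℝ (Fin n))),
      ∀ y ∈ (S : Set (EuclideanSpace ℝ (Fin n))), x ≠ y → |inner ℝ x y| ≤ θ := by
    intro x hx y hy hxy
    rw [Finset.mem_coe, hSdef, Finset.mem_image] at hx hy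
    obtain ⟨v, hv, rfl⟩ := hx
    obtain ⟨w, hw, rfl⟩ := hy
    have hvw : v ≠ w := fun h => hxy (by rw [h])
    rw [BSAAux.inner_emb hn1]
    rw [abs_div, abs_of_pos hn', div_le_iff₀ hn']
    calc |BSAAux.corr n v w| ≤ θ * n := hTgood v hv w hw hvw
      _ = θ * n := rfl
  have hgeom := BSAAux.geom (S : Set (EuclideanSpace ℝ (Fin n))) hSsph θ hθ0.le hθ6 hcorrS
  have hd1 : 1 < Real.sqrt (2 - 2 * θ) := by
    rw [show (1:ℝ) = Real.sqrt 1 by rw [Real.sqrt_one]]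
    exact Real.sqrt_lt_sqrt (by norm_num) (by linarith)
  have hstrict : StrictAntipProp (S : Set (EuclideanSpace ℝ (Fin n))) := by
    intro x hx y hy hxy
    obtain ⟨f, hf1, hf2, hf3⟩ := hgeom x hx y hy hxy
    exact ⟨f, hf1, lt_of_lt_of_le hd1 hf2, hf3⟩
  refine ⟨S, hcount, hSsph, ⟨Real.sqrt (2 - 2 * θ), ?_, hd1, ?_⟩, ?_, ?_⟩
  · exact Real.sqrt_lt_sqrt (by linarith) (by rw [hθdef]; linarith)
  · refine ⟨hSsph.trans sphere_subset_closedBall, ?_⟩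
    intro x hx y hy hxy
    exact hgeom x hx y hy hxy
  · exact Real.sqrt_le_sqrt (by linarith)
  · calc ((1 + (Real.exp (θ ^ 2 / 4) - 1) : ℝ)) ^ n < (S.card : ℝ) := hcount
      _ ≤ (strictHalpha (EuclideanSpace ℝ (Fin n)) : ℝ) := by
          apply Nat.cast_le.2
          apply le_csSup (bdd_strict (EuclideanSpace ℝ (Fin n)))
          exact ⟨S, rfl, hSsph, hstrict⟩

end
end

section
/- H_α(ℓ_1^3) = H'_α(ℓ_1^3) = 2³ = 8: there exist 8 points on the unit sphere of ℓ_1^3 (namely the set (5/9)·{−1,1}³ viewed inside a suitable isometric copy, equivalently the preimages under the isometry T(e_i) = x_i with x_1 = (1,1,−1/3), x_2 = (1,−1/3,1), x_3 = (−1/3,1,1)) forming a bounded and separated antipodal set with constant d = 10/9 > 1, and 8 is the largest possible cardinality of such a set. -/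
open Metric

noncomputable section

/-- `ℓ_1^3`. -/
abbrev L13 : Type := PiLp 1 (fun _ : Fin 3 => ℝ)


open Pointwise MeasureTheory Module Set
open scoped ENNReal

def Antip' {X : Type*} [NormedAddCommGroup X] [NormedSpace ℝ X] (S : Set X) : Prop :=
  ∀ x ∈ S, ∀ y ∈ S, x ≠ y → ∃ f : X →L[ℝ] ℝ,
    1 ≤ f x - f y ∧ ∀ z ∈ S, f y ≤ f z ∧ f z ≤ f x

lemma DG_top {X : Type u} [NormedAddCommGroup X] [NormedSpace ℝ X] [FiniteDimensional ℝ X]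
    (S : Finset X) (hS : Antip' (S : Set X)) (htop : affineSpan ℝ (S : Set X) = ⊤) :
    S.card ≤ 2 ^ finrank ℝ X := by
  classical
  borelize X
  set n := finrank ℝ X with hn
  let μ : Measure X := (Module.finBasis ℝ X).addHaar
  set P : Set X := convexHull ℝ (S : Set X) with hP
  have hPc : Convex ℝ P := convex_convexHull ℝ _
  have hPcpt : IsCompact P := S.finite_toSet.isCompact_convexHull (𝕜 := ℝ)
  have hint : (interior P).Nonempty := interior_convexHull_nonempty_iff_affineSpan_eq_top.2 htop
  have hμP_pos : 0 < μ P :=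
    lt_of_lt_of_le (isOpen_interior.measure_pos μ hint) (measure_mono interior_subset)
  have hμP_ne_top : μ P ≠ ⊤ := hPcpt.measure_lt_top.ne
  set A : X → Set X := fun x => (2⁻¹ : ℝ) • ((x + ·) '' P) with hA
  have hmemA : ∀ x z, z ∈ A x ↔ ∃ p ∈ P, z = (2⁻¹ : ℝ) • (x + p) := by
    intro x z
    constructor
    · rintro ⟨q, ⟨p, hp, rfl⟩, rfl⟩; exact ⟨p, hp, rfl⟩
    · rintro ⟨p, hp, rfl⟩; exact ⟨x + p, ⟨p, hp, rfl⟩, rfl⟩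
  have hAcpt : ∀ x, IsCompact (A x) := by
    intro x
    have h1 : IsCompact ((x + ·) '' P) := hPcpt.image (continuous_add_left x)
    have h2 : IsCompact (((2⁻¹ : ℝ) • ·) '' ((x + ·) '' P)) :=
      h1.image (continuous_const_smul _)
    show IsCompact ((2⁻¹ : ℝ) • ((x + ·) '' P))
    rwa [← Set.image_smul]
  have hAsub : ∀ x ∈ (S : Set X), A x ⊆ P := by
    intro x hx z hz
    rw [hmemA] at hz
    obtain ⟨p, hp, hzz⟩ := hz
    subst hzz
    have hxP : x ∈ P := subset_convexHull ℝ _ hx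
    have := hPc hxP hp (by norm_num : (0:ℝ) ≤ 2⁻¹) (by norm_num : (0:ℝ) ≤ 2⁻¹) (by norm_num)
    simpa [smul_add] using this
  have hμA : ∀ x, μ (A x) = ENNReal.ofReal ((2:ℝ)⁻¹ ^ n) * μ P := by
    intro x
    have h1 : μ ((x + ·) '' P) = μ P := by
      rw [Set.image_add_left, measure_preimage_add]
    rw [hA]
    simp only
    rw [Measure.addHaar_smul_of_nonneg μ (by norm_num : (0:ℝ) ≤ 2⁻¹), h1, hn]
  have hdisj : (S : Set X).Pairwise (Function.onFun (AEDisjoint μ) A) := by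
    intro x hx y hy hxy
    obtain ⟨f, hgap, hbound⟩ := hS x hx y hy hxy
    have hPb : ∀ w ∈ P, f y ≤ f w ∧ f w ≤ f x := by
      have hconv : Convex ℝ {w | f y ≤ f w ∧ f w ≤ f x} := by
        have := (convex_halfSpace_ge (f.toLinearMap.isLinear) (f y)).inter
          (convex_halfSpace_le (f.toLinearMap.isLinear) (f x))
        simpa [Set.setOf_and] using this
      intro w hw
      exact convexHull_min (fun z hz => hbound z hz) hconv hw
    have hkey : A x ∩ A y ⊆ f ⁻¹' {(f x + f y) / 2} := by
      rintro z ⟨hzx, hzy⟩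
      rw [hmemA] at hzx hzy
      obtain ⟨p, hp, hzp⟩ := hzx
      obtain ⟨q, hq, heq⟩ := hzy
      have hfp := hPb p hp
      have hfq := hPb q hq
      have hzpf : f z = 2⁻¹ * (f x + f p) := by
        rw [hzp, f.map_smul, f.map_add]; simp
      have hzqf : f z = 2⁻¹ * (f y + f q) := by
        rw [heq, f.map_smul, f.map_add]; simp
      simp only [Set.mem_preimage, Set.mem_singleton_iff]
      linarith [hfp.1, hfp.2, hfq.1, hfq.2]
    refine measure_mono_null hkey ?_
    have hne : f x - f y ≠ 0 := by linarith
    set c : ℝ := (f x + f y) / 2 with hc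
    set w : X := (c / (f x - f y)) • (x - y) with hw
    have hfw : f w = c := by
      rw [hw, f.map_smul]
      simp only [map_sub, smul_eq_mul]
      field_simp
    have hker : (LinearMap.ker (f : X →ₗ[ℝ] ℝ)) ≠ ⊤ := by
      intro h
      have hmem : x - y ∈ LinearMap.ker (f : X →ₗ[ℝ] ℝ) := h ▸ Submodule.mem_top
      rw [LinearMap.mem_ker] at hmem
      simp only [ContinuousLinearMap.coe_coe, map_sub] at hmem
      exact hne hmem
    have hset : f ⁻¹' {c} = (w + ·) '' ((LinearMap.ker (f : X →ₗ[ℝ] ℝ) : Set X)) := by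
      ext z
      simp only [Set.mem_preimage, Set.mem_singleton_iff, Set.mem_image, SetLike.mem_coe,
        LinearMap.mem_ker]
      constructor
      · intro hz
        refine ⟨z - w, ?_, by abel⟩
        simp only [ContinuousLinearMap.coe_coe, map_sub, hz, hfw, sub_self]
      · rintro ⟨u, hu, rfl⟩
        simp only [ContinuousLinearMap.coe_coe] at hu
        simp [map_add, hu, hfw]
    rw [hset, Set.image_add_left, measure_preimage_add]
    exact Measure.addHaar_submodule μ _ hker
  have hsum : ∑ x ∈ S, μ (A x) = μ (⋃ x ∈ S, A x) :=
    (measure_biUnion_finset₀ hdisj (fun x _ => ((hAcpt x).measurableSet).nullMeasurableSet)).symm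
  have hUsub : μ (⋃ x ∈ S, A x) ≤ μ P :=
    measure_mono (Set.iUnion₂_subset fun x hx => hAsub x hx)
  have hmain : (S.card : ℝ≥0∞) * (ENNReal.ofReal ((2:ℝ)⁻¹ ^ n) * μ P) ≤ μ P := by
    have h1 : ∑ x ∈ S, μ (A x) = (S.card : ℝ≥0∞) * (ENNReal.ofReal ((2:ℝ)⁻¹ ^ n) * μ P) := by
      rw [Finset.sum_congr rfl fun x _ => hμA x, Finset.sum_const, nsmul_eq_mul]
    rw [← h1]
    rw [hsum]
    exact hUsub
  have hofr : ENNReal.ofReal ((2:ℝ)⁻¹ ^ n) = ((2:ℝ≥0∞) ^ n)⁻¹ := by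
    rw [ENNReal.ofReal_pow (by norm_num : (0:ℝ) ≤ 2⁻¹),
      ENNReal.ofReal_inv_of_pos (by norm_num : (0:ℝ) < 2), ← ENNReal.inv_pow]
    norm_num
  rw [hofr] at hmain
  have h2n : ((2:ℝ≥0∞) ^ n) ≠ 0 := by positivity
  have h2nt : ((2:ℝ≥0∞) ^ n) ≠ ⊤ := (ENNReal.pow_ne_top (by norm_num))
  have hfin : (S.card : ℝ≥0∞) * μ P ≤ 2 ^ n * μ P := by
    have heq : (S.card : ℝ≥0∞) * μ P
        = 2 ^ n * ((S.card : ℝ≥0∞) * (((2:ℝ≥0∞) ^ n)⁻¹ * μ P)) := by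
      rw [← mul_assoc, ← mul_assoc]
      congr 1
      rw [mul_comm ((2:ℝ≥0∞)^n), mul_assoc, ENNReal.mul_inv_cancel h2n h2nt, mul_one]
    rw [heq]
    exact mul_le_mul_right hmain _
  have hcard : (S.card : ℝ≥0∞) ≤ 2 ^ n :=
    (ENNReal.mul_le_mul_iff_left hμP_pos.ne' hμP_ne_top).1 hfin
  have hfin2 : ((S.card : ℕ) : ℝ≥0∞) ≤ ((2 ^ n : ℕ) : ℝ≥0∞) := by push_cast; exact hcard
  exact_mod_cast hfin2

lemma DG_aux : ∀ (n : ℕ) (X : Type u) [NormedAddCommGroup X] [NormedSpace ℝ X]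
    [FiniteDimensional ℝ X], finrank ℝ X = n → ∀ S : Finset X, Antip' (S : Set X) →
    S.card ≤ 2 ^ n := by
  intro n
  induction n using Nat.strong_induction_on with
  | _ n IH =>
    intro X _ _ _ hrank S hS
    by_cases htop : affineSpan ℝ (S : Set X) = ⊤
    · simpa [hrank] using DG_top S hS htop
    · rcases S.eq_empty_or_nonempty with rfl | ⟨s₀, hs₀⟩
      · simp
      · set V := vectorSpan ℝ (S : Set X) with hV
        have hVne : V ≠ ⊤ := by
          intro h
          exact htop ((AffineSubspace.affineSpan_eq_top_iff_vectorSpan_eq_top_of_nonempty ℝ _ _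
            ⟨s₀, hs₀⟩).2 h)
        have hm : finrank ℝ V < n := by
          rw [← hrank]
          exact Submodule.finrank_lt hVne
        set m := finrank ℝ V with hmm
        -- map S into V
        have hmem : ∀ s ∈ S, s - s₀ ∈ V := fun s hs => by
          simpa using vsub_mem_vectorSpan ℝ (Finset.mem_coe.2 hs) (Finset.mem_coe.2 hs₀)
        classical
        set φ : {s // s ∈ S} → V := fun s => ⟨s.1 - s₀, hmem s.1 s.2⟩ with hφ
        have hφinj : Function.Injective φ := by
          rintro ⟨a, ha⟩ ⟨b, hb⟩ hab
          simp only [hφ, Subtype.mk_eq_mk, sub_left_inj] at hab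
          exact Subtype.ext hab
        set S' : Finset V := S.attach.image φ with hS'
        have hcard : S'.card = S.card := by
          rw [hS', Finset.card_image_of_injective _ hφinj, Finset.card_attach]
        have hS'prop : Antip' (S' : Set V) := by
          rintro x' hx' y' hy' hxy'
          simp only [hS', Finset.coe_image, Set.mem_image, Finset.mem_coe,
            Finset.mem_attach] at hx' hy'
          obtain ⟨⟨x, hx⟩, -, rfl⟩ := hx'
          obtain ⟨⟨y, hy⟩, -, rfl⟩ := hy'
          have hxy : x ≠ y := by
            intro h; exact hxy' (by simp [hφ, h])
          obtain ⟨f, hgap, hbound⟩ := hS x hx y hy hxy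
          refine ⟨f.comp V.subtypeL, ?_, ?_⟩
          · simpa [hφ, map_sub] using (by linarith : (1:ℝ) ≤ (f x - f s₀) - (f y - f s₀))
          · rintro z' hz'
            simp only [hS', Finset.coe_image, Set.mem_image, Finset.mem_coe,
              Finset.mem_attach] at hz'
            obtain ⟨⟨z, hz⟩, -, rfl⟩ := hz'
            have h1 := hbound z hz
            constructor <;>
              · simp only [hφ, ContinuousLinearMap.comp_apply, Submodule.subtypeL_apply,
                  map_sub]
                cases h1 with
                | intro h1a h1b => linarith
        have := IH m hm V rfl S' hS'prop
        calc S.card = S'.card := hcard.symm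
          _ ≤ 2 ^ m := this
          _ ≤ 2 ^ n := Nat.pow_le_pow_right (by norm_num) hm.le

lemma L13_norm (v : L13) : ‖v‖ = |v 0| + |v 1| + |v 2| := by
  rw [PiLp.norm_eq_sum (by norm_num : (0:ℝ) < (1 : ENNReal).toReal)]
  simp [Fin.sum_univ_three, Real.norm_eq_abs]

noncomputable def cf (a : Fin 3 → ℝ) : L13 →L[ℝ] ℝ :=
  LinearMap.toContinuousLinearMap
    { toFun := fun v => a 0 * v 0 + a 1 * v 1 + a 2 * v 2
      map_add' := by intro u v; simp [PiLp.add_apply]; ring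
      map_smul' := by intro c v; simp [PiLp.smul_apply, smul_eq_mul]; ring }

lemma cf_apply (a : Fin 3 → ℝ) (v : L13) : cf a v = a 0 * v 0 + a 1 * v 1 + a 2 * v 2 := rfl

lemma cf_norm_le (a : Fin 3 → ℝ) (h : ∀ i, |a i| ≤ 1) : ‖cf a‖ ≤ 1 := by
  refine ContinuousLinearMap.opNorm_le_bound _ zero_le_one fun v => ?_
  rw [cf_apply, one_mul, L13_norm, Real.norm_eq_abs]
  have h0 : |a 0 * v 0| ≤ |v 0| := by
    rw [abs_mul]; exact mul_le_of_le_one_left (abs_nonneg _) (h 0)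
  have h1 : |a 1 * v 1| ≤ |v 1| := by
    rw [abs_mul]; exact mul_le_of_le_one_left (abs_nonneg _) (h 1)
  have h2 : |a 2 * v 2| ≤ |v 2| := by
    rw [abs_mul]; exact mul_le_of_le_one_left (abs_nonneg _) (h 2)
  calc |a 0 * v 0 + a 1 * v 1 + a 2 * v 2| ≤ |a 0 * v 0 + a 1 * v 1| + |a 2 * v 2| := abs_add_le _ _
    _ ≤ |a 0 * v 0| + |a 1 * v 1| + |a 2 * v 2| := by linarith [abs_add_le (a 0 * v 0) (a 1 * v 1)]
    _ ≤ |v 0| + |v 1| + |v 2| := by linarith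

noncomputable def pt : Fin 8 → L13 :=
  ![(WithLp.equiv 1 (Fin 3 → ℝ)).symm ![1/3, 1/3, 1/3],
    -(WithLp.equiv 1 (Fin 3 → ℝ)).symm ![1/3, 1/3, 1/3],
    (WithLp.equiv 1 (Fin 3 → ℝ)).symm ![2/3, -1/6, -1/6],
    -(WithLp.equiv 1 (Fin 3 → ℝ)).symm ![2/3, -1/6, -1/6],
    (WithLp.equiv 1 (Fin 3 → ℝ)).symm ![-1/6, -1/6, 2/3],
    -(WithLp.equiv 1 (Fin 3 → ℝ)).symm ![-1/6, -1/6, 2/3],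
    (WithLp.equiv 1 (Fin 3 → ℝ)).symm ![1/6, -2/3, 1/6],
    -(WithLp.equiv 1 (Fin 3 → ℝ)).symm ![1/6, -2/3, 1/6]]

noncomputable def rows : Fin 3 → (Fin 3 → ℝ) := ![![1, 1, -1/3], ![1, -1/3, 1], ![-1/3, 1, 1]]

def eps : Fin 8 → Fin 3 → ℤ :=
  ![![1,1,1], ![-1,-1,-1], ![1,1,-1], ![-1,-1,1], ![-1,1,1], ![1,-1,-1], ![-1,1,-1], ![1,-1,1]]

lemma rows_abs_le (i : Fin 3) : ∀ j, |rows i j| ≤ 1 := by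
  fin_cases i <;> intro j <;> fin_cases j <;> norm_num [rows, abs_le]

lemma pt_norm (k : Fin 8) : ‖pt k‖ = 1 := by
  fin_cases k <;>
    norm_num [pt, L13_norm, WithLp.equiv_symm_apply, PiLp.toLp_apply, Matrix.cons_val, Matrix.cons_val_two, Matrix.tail_cons, Matrix.head_cons, PiLp.neg_apply, abs_le, abs_of_pos]

lemma L1 : ∀ (k : Fin 8) (i : Fin 3), cf (rows i) (pt k) = (eps k i : ℝ) * (5/9) := by
  intro k i
  fin_cases k <;> fin_cases i <;>
    norm_num [pt, rows, eps, cf_apply, WithLp.equiv_symm_apply, PiLp.toLp_apply, Matrix.cons_val, Matrix.cons_val_two, Matrix.tail_cons, Matrix.head_cons, PiLp.neg_apply]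

lemma eps_pm : ∀ (k : Fin 8) (i : Fin 3), eps k i = 1 ∨ eps k i = -1 := by decide

lemma eps_rows : ∀ k l : Fin 8, k ≠ l → ∃ i, eps k i ≠ eps l i := by decide

lemma master (k l : Fin 8) (h : k ≠ l) :
    ∃ f : L13 →L[ℝ] ℝ, ‖f‖ ≤ 1 ∧ f (pt k) = 5/9 ∧ f (pt l) = -(5/9) ∧
      ∀ m : Fin 8, -(5/9 : ℝ) ≤ f (pt m) ∧ f (pt m) ≤ 5/9 := by
  obtain ⟨i, hi⟩ := eps_rows k l h
  have habs : ∀ m : Fin 8, -(5/9 : ℝ) ≤ cf (rows i) (pt m) ∧ cf (rows i) (pt m) ≤ 5/9 := by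
    intro m; rw [L1]; rcases eps_pm m i with h'|h' <;> rw [h'] <;> norm_num
  rcases eps_pm k i with hk | hk <;> rcases eps_pm l i with hl | hl
  · exact absurd (hk.trans hl.symm) hi
  · refine ⟨cf (rows i), cf_norm_le _ (rows_abs_le i), ?_, ?_, habs⟩
    · rw [L1, hk]; norm_num
    · rw [L1, hl]; norm_num
  · refine ⟨-(cf (rows i)), ?_, ?_, ?_, ?_⟩
    · rw [norm_neg]; exact cf_norm_le _ (rows_abs_le i)
    · rw [ContinuousLinearMap.neg_apply, L1, hk]; norm_num
    · rw [ContinuousLinearMap.neg_apply, L1, hl]; norm_num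
    · intro m
      rw [ContinuousLinearMap.neg_apply]
      have := habs m
      constructor <;> linarith [this.1, this.2]
  · exact absurd (hk.trans hl.symm) hi

lemma pt_inj : Function.Injective pt := by
  intro k l h
  by_contra hne
  obtain ⟨f, -, hfk, hfl, -⟩ := master k l hne
  rw [h, hfl] at hfk
  norm_num at hfk

lemma master_set : ∀ x ∈ Set.range pt, ∀ y ∈ Set.range pt, x ≠ y →
    ∃ f : L13 →L[ℝ] ℝ, ‖f‖ ≤ 1 ∧ f x = 5/9 ∧ f y = -(5/9) ∧
      ∀ z ∈ Set.range pt, f y ≤ f z ∧ f z ≤ f x := by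
  rintro x ⟨k, rfl⟩ y ⟨l, rfl⟩ hxy
  have hkl : k ≠ l := fun h => hxy (by rw [h])
  obtain ⟨f, hnorm, hfk, hfl, hbound⟩ := master k l hkl
  refine ⟨f, hnorm, hfk, hfl, ?_⟩
  rintro z ⟨m, rfl⟩
  rw [hfk, hfl]
  exact hbound m

lemma finrank_L13 : Module.finrank ℝ L13 = 3 := by
  rw [Module.finrank_eq_card_basis (PiLp.basisFun 1 ℝ (Fin 3))]
  simp

lemma range_pt : Set.range pt = {pt 0, pt 1, pt 2, pt 3, pt 4, pt 5, pt 6, pt 7} := by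
  ext z
  constructor
  · rintro ⟨k, rfl⟩
    fin_cases k <;> simp [Set.mem_insert_iff]
  · intro hz
    simp only [Set.mem_insert_iff, Set.mem_singleton_iff] at hz
    rcases hz with rfl|rfl|rfl|rfl|rfl|rfl|rfl|rfl
    exacts [⟨0, rfl⟩, ⟨1, rfl⟩, ⟨2, rfl⟩, ⟨3, rfl⟩, ⟨4, rfl⟩, ⟨5, rfl⟩, ⟨6, rfl⟩, ⟨7, rfl⟩]

/-- `H_α(ℓ_1^3) = H'_α(ℓ_1^3) = 2³ = 8`: the `8` points
`±(1/3,1/3,1/3), ±(2/3,−1/6,−1/6), ±(−1/6,−1/6,2/3), ±(1/6,−2/3,1/6)` — the preimages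
under the isometry `T(e_i) = x_i` (with `x₁ = (1,1,−1/3)`, `x₂ = (1,−1/3,1)`,
`x₃ = (−1/3,1,1)`) of the vertices `(5/9)·{−1,1}³` — lie on the unit sphere of `ℓ_1^3`
and form a bounded and separated antipodal set with constant `d = 10/9 > 1`, and `8` is
the largest possible cardinality of such a set. -/
theorem Halpha_l1_three (v₁ v₂ v₃ v₄ : L13)
    (h₁ : v₁ = (WithLp.equiv 1 (Fin 3 → ℝ)).symm ![1/3, 1/3, 1/3])
    (h₂ : v₂ = (WithLp.equiv 1 (Fin 3 → ℝ)).symm ![2/3, -1/6, -1/6])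
    (h₃ : v₃ = (WithLp.equiv 1 (Fin 3 → ℝ)).symm ![-1/6, -1/6, 2/3])
    (h₄ : v₄ = (WithLp.equiv 1 (Fin 3 → ℝ)).symm ![1/6, -2/3, 1/6])
    (S : Set L13) (hS : S = {v₁, -v₁, v₂, -v₂, v₃, -v₃, v₄, -v₄}) :
    S.ncard = 8 ∧ S ⊆ sphere (0 : L13) 1 ∧ IsBSA S (10 / 9) ∧
    Halpha L13 = 8 ∧ strictHalpha L13 = 8 := by
  -- identify S with the range of `pt`
  have hpts : S = Set.range pt := by
    subst h₁ h₂ h₃ h₄ hS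
    rw [range_pt]
    rfl
  classical
  have hrange_fin : Set.range pt = ↑(Finset.univ.image pt) := by simp
  have hcard_fin : (Finset.univ.image pt).card = 8 := by
    rw [Finset.card_image_of_injective _ pt_inj, Finset.card_univ, Fintype.card_fin]
  have hncard : S.ncard = 8 := by
    rw [hpts, hrange_fin, Set.ncard_coe_finset, hcard_fin]
  have hsphere : S ⊆ sphere (0 : L13) 1 := by
    rw [hpts]
    rintro z ⟨k, rfl⟩
    exact mem_sphere_zero_iff_norm.2 (pt_norm k)
  have hBSA : IsBSA S (10 / 9) := by
    constructor
    · exact fun z hz => sphere_subset_closedBall (hsphere hz)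
    · intro x hx y hy hxy
      rw [hpts] at hx hy
      obtain ⟨f, hnorm, hfx, hfy, hbound⟩ := master_set x hx y hy hxy
      refine ⟨f, hnorm, by rw [hfx, hfy]; norm_num, ?_⟩
      intro z hz
      exact hbound z (hpts ▸ hz)
  have hupper : ∀ kk ∈ {k : ℕ | ∃ T : Finset L13, T.card = k ∧
      (T : Set L13) ⊆ sphere (0 : L13) 1 ∧ AntipProp (T : Set L13)}, kk ≤ 8 := by
    rintro kk ⟨T, hTcard, -, hTa⟩
    have hT' : Antip' (T : Set L13) := by
      intro x hx y hy hxy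
      obtain ⟨f, -, h1, h2⟩ := hTa x hx y hy hxy
      exact ⟨f, h1, h2⟩
    have := DG_aux 3 L13 finrank_L13 T hT'
    omega
  have hupper' : ∀ kk ∈ {k : ℕ | ∃ T : Finset L13, T.card = k ∧
      (T : Set L13) ⊆ sphere (0 : L13) 1 ∧ StrictAntipProp (T : Set L13)}, kk ≤ 8 := by
    rintro kk ⟨T, hTcard, -, hTa⟩
    have hT' : Antip' (T : Set L13) := by
      intro x hx y hy hxy
      obtain ⟨f, -, h1, h2⟩ := hTa x hx y hy hxy
      exact ⟨f, h1.le, h2⟩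
    have := DG_aux 3 L13 finrank_L13 T hT'
    omega
  have hTmem : ∀ x ∈ (↑(Finset.univ.image pt) : Set L13), ∀ y ∈ (↑(Finset.univ.image pt) : Set L13),
      x ≠ y → ∃ f : L13 →L[ℝ] ℝ, ‖f‖ ≤ 1 ∧ f x = 5/9 ∧ f y = -(5/9) ∧
      ∀ z ∈ (↑(Finset.univ.image pt) : Set L13), f y ≤ f z ∧ f z ≤ f x := by
    rw [← hrange_fin]
    exact master_set
  have hsph_fin : (↑(Finset.univ.image pt) : Set L13) ⊆ sphere (0 : L13) 1 := by
    rw [← hrange_fin]; rw [hpts] at hsphere; exact hsphere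
  have hmem : 8 ∈ {k : ℕ | ∃ T : Finset L13, T.card = k ∧
      (T : Set L13) ⊆ sphere (0 : L13) 1 ∧ AntipProp (T : Set L13)} := by
    refine ⟨Finset.univ.image pt, hcard_fin, hsph_fin, ?_⟩
    intro x hx y hy hxy
    obtain ⟨f, hnorm, hfx, hfy, hbound⟩ := hTmem x hx y hy hxy
    exact ⟨f, hnorm, by rw [hfx, hfy]; norm_num, hbound⟩
  have hmem' : 8 ∈ {k : ℕ | ∃ T : Finset L13, T.card = k ∧
      (T : Set L13) ⊆ sphere (0 : L13) 1 ∧ StrictAntipProp (T : Set L13)} := by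
    refine ⟨Finset.univ.image pt, hcard_fin, hsph_fin, ?_⟩
    intro x hx y hy hxy
    obtain ⟨f, hnorm, hfx, hfy, hbound⟩ := hTmem x hx y hy hxy
    exact ⟨f, hnorm, by rw [hfx, hfy]; norm_num, hbound⟩
  refine ⟨hncard, hsphere, hBSA, ?_, ?_⟩
  · exact le_antisymm (csSup_le ⟨8, hmem⟩ hupper) (le_csSup ⟨8, hupper⟩ hmem)
  · exact le_antisymm (csSup_le ⟨8, hmem'⟩ hupper') (le_csSup ⟨8, hupper'⟩ hmem')

end
end
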